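/- arXiv:2001.01486 — 4 statements merged into one kernel-verified Lean document; each statement's English description precedes it below -/
import Mathlib

section
/- Let θ ∈ ℝ and let Y_θ be the Crump-Mode-Jagers branching process in which each individual, independently, begets children according to a Poisson point process on [0,∞) of intensity e^{-θa} da in its age a, started from one ancestor at time 0. Then for every t ≥ 0, E[Y_θ(t)] = (e^{(1-θ)t} − θ)/(1−θ) if θ ≠ 1, and E[Y_1(t)] = 1 + t if θ = 1. -/
open MeasureTheory

/-- The reproduction intensity measure `e^{-θs} ds` on `[0,∞)`. -/
noncomputable def reproMeasure (θ : ℝ) : Measure ℝ :=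
  volume.withDensity fun s => ENNReal.ofReal (if 0 ≤ s then Real.exp (-θ * s) else 0)

/-- `n`-fold additive convolution power of a measure on `ℝ` (with `μ^{*0} = δ₀`). -/
noncomputable def convPow (μ : Measure ℝ) : ℕ → Measure ℝ
  | 0 => Measure.dirac 0
  | n + 1 => (convPow μ n).conv μ

/-- The expected population size `E[Y_θ(t)] = ∑_{n≥0} μ_θ^{*n}([0,t])` of the
general branching process with reproduction intensity `e^{-θa} da`. -/
noncomputable def meanYule (θ t : ℝ) : ℝ :=
  (∑' n : ℕ, convPow (reproMeasure θ) n (Set.Icc 0 t)).toReal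
open ENNReal

lemma withDensity_conv (f g : ℝ → ℝ≥0∞) (hf : Measurable f) (hg : Measurable g) :
    (volume.withDensity f).conv (volume.withDensity g)
      = volume.withDensity (fun x => ∫⁻ y, f (x - y) * g y) := by
  ext s hs
  rw [Measure.conv, Measure.map_apply measurable_add hs,
    Measure.prod_apply (measurable_add hs)]
  have key : ∀ x : ℝ, (volume.withDensity g) (Prod.mk x ⁻¹' ((fun p : ℝ × ℝ => p.1 + p.2) ⁻¹' s))
      = ∫⁻ y, s.indicator 1 (x + y) * g y := by
    intro x
    have hA : MeasurableSet ((fun y => x + y) ⁻¹' s) := (measurable_const_add x) hs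
    rw [show Prod.mk x ⁻¹' ((fun p : ℝ × ℝ => p.1 + p.2) ⁻¹' s) = (fun y => x + y) ⁻¹' s from rfl,
      withDensity_apply _ hA, ← lintegral_indicator hA]
    congr 1; funext y
    by_cases h : x + y ∈ s <;> simp [Set.indicator, h]
  simp only [key]
  have hmeas : Measurable fun x => ∫⁻ y, s.indicator 1 (x + y) * g y := by
    apply Measurable.lintegral_prod_right
    exact ((measurable_one.indicator hs).comp (measurable_fst.add measurable_snd)).mul
      (hg.comp measurable_snd)
  rw [lintegral_withDensity_eq_lintegral_mul _ hf hmeas]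
  simp only [Pi.mul_apply]
  have step1 : ∫⁻ x, f x * ∫⁻ y, s.indicator 1 (x + y) * g y
      = ∫⁻ y, ∫⁻ x, f x * (s.indicator 1 (x + y) * g y) := by
    rw [← lintegral_lintegral_swap]
    · congr 1; funext x
      have h1 : Measurable fun y => s.indicator 1 (x + y) * g y := by
        exact ((measurable_one.indicator hs).comp (measurable_const_add x)).mul hg
      rw [lintegral_const_mul _ h1]
    · apply Measurable.aemeasurable
      exact (hf.comp measurable_fst).mul
        (((measurable_one.indicator hs).comp (measurable_fst.add measurable_snd)).mul
          (hg.comp measurable_snd))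
  rw [step1]
  have step2 : ∀ y : ℝ, ∫⁻ x, f x * (s.indicator 1 (x + y) * g y)
      = ∫⁻ z, s.indicator 1 z * (f (z - y) * g y) := by
    intro y
    rw [← lintegral_add_right_eq_self (fun z => s.indicator 1 z * (f (z - y) * g y)) y]
    congr 1; funext x
    simp only [add_sub_cancel_right]; ring
  simp only [step2]
  rw [lintegral_lintegral_swap]
  · rw [withDensity_apply _ hs, ← lintegral_indicator hs]
    congr 1; funext z
    have h2 : Measurable fun x => f (z - x) * g x := by
      exact (hf.comp (measurable_const_sub z)).mul hg
    rw [lintegral_const_mul _ h2]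
    by_cases h : z ∈ s <;> simp [Set.indicator, h]
  · apply Measurable.aemeasurable
    exact ((measurable_one.indicator hs).comp measurable_snd).mul
      (((hf.comp (measurable_snd.sub measurable_fst))).mul (hg.comp measurable_fst))


/-- Density of the n+1-fold convolution power. -/
noncomputable def dens (θ : ℝ) (n : ℕ) (x : ℝ) : ℝ≥0∞ :=
  ENNReal.ofReal (if 0 ≤ x then Real.exp (-θ * x) * x ^ n / n.factorial else 0)

lemma dens_measurable (θ : ℝ) (n : ℕ) : Measurable (dens θ n) := by
  apply ENNReal.measurable_ofReal.comp
  exact Measurable.ite measurableSet_Ici (by fun_prop) measurable_const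

lemma repro_eq (θ : ℝ) : reproMeasure θ = volume.withDensity (dens θ 0) := by
  unfold reproMeasure dens
  congr 1; funext s
  by_cases h : 0 ≤ s <;> simp [h]

lemma convDens (θ : ℝ) (n : ℕ) (x : ℝ) :
    ∫⁻ y, dens θ n (x - y) * dens θ 0 y = dens θ (n + 1) x := by
  by_cases hx : 0 ≤ x
  · have hmem : ∀ y, dens θ n (x - y) * dens θ 0 y
        = (Set.Icc 0 x).indicator
            (fun y => ENNReal.ofReal (Real.exp (-θ * x) * (x - y) ^ n / n.factorial)) y := by
      intro y
      by_cases hy : y ∈ Set.Icc (0:ℝ) x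
      · obtain ⟨hy0, hyx⟩ := Set.mem_Icc.mp hy
        have hxy : 0 ≤ x - y := by linarith
        rw [Set.indicator_of_mem (Set.mem_Icc.mpr ⟨hy0, hyx⟩)]
        unfold dens
        rw [if_pos hxy, if_pos hy0, ← ENNReal.ofReal_mul (by positivity)]
        congr 1
        have he : Real.exp (-θ * (x - y)) * Real.exp (-θ * y) = Real.exp (-θ * x) := by
          rw [← Real.exp_add]; congr 1; ring
        simp only [pow_zero, Nat.factorial_zero, Nat.cast_one, mul_one, div_one]
        linear_combination ((x - y) ^ n / (n.factorial : ℝ)) * he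
      · rw [Set.indicator_of_notMem hy]
        rw [Set.mem_Icc, not_and_or] at hy
        unfold dens
        rcases hy with h | h
        · rw [if_neg h, ENNReal.ofReal_zero, mul_zero]
        · push_neg at h
          rw [if_neg (by push_neg; linarith), ENNReal.ofReal_zero, zero_mul]
    simp only [hmem]
    rw [lintegral_indicator measurableSet_Icc]
    have hint : IntegrableOn (fun y => Real.exp (-θ * x) * (x - y) ^ n / n.factorial)
        (Set.Icc 0 x) volume := (Continuous.integrableOn_Icc (by fun_prop))
    rw [← ofReal_integral_eq_lintegral_ofReal hint ((ae_restrict_iff' measurableSet_Icc).mpr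
      (ae_of_all _ fun y hy => by
        obtain ⟨hy0, hyx⟩ := Set.mem_Icc.mp hy
        have hxy : 0 ≤ x - y := by linarith
        positivity))]
    unfold dens
    rw [if_pos hx]
    congr 1
    rw [MeasureTheory.integral_Icc_eq_integral_Ioc, ← intervalIntegral.integral_of_le hx]
    have : ∀ y : ℝ, Real.exp (-θ * x) * (x - y) ^ n / n.factorial
        = (Real.exp (-θ * x) / n.factorial) * (x - y) ^ n := by intro y; ring
    simp only [this]
    rw [intervalIntegral.integral_const_mul]
    rw [intervalIntegral.integral_comp_sub_left (fun u => u ^ n) x]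
    simp only [sub_self, sub_zero]
    rw [integral_pow]
    simp only [ne_eq, zero_pow (Nat.succ_ne_zero n), sub_zero]
    rw [Nat.factorial_succ]
    push_cast
    have hfac : (n.factorial : ℝ) ≠ 0 := Nat.cast_ne_zero.mpr n.factorial_ne_zero
    have hn1 : (n : ℝ) + 1 ≠ 0 := by positivity
    rw [div_mul_div_comm]
    ring
  · have hz : ∀ y : ℝ, dens θ n (x - y) * dens θ 0 y = 0 := by
      intro y
      by_cases hy : 0 ≤ y
      · have : ¬ 0 ≤ x - y := by intro h; apply hx; linarith
        unfold dens; rw [if_neg this, ENNReal.ofReal_zero, zero_mul]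
      · unfold dens; rw [if_neg hy, ENNReal.ofReal_zero, mul_zero]
    simp only [hz, lintegral_zero]
    unfold dens; rw [if_neg hx, ENNReal.ofReal_zero]

lemma convPow_succ_eq (θ : ℝ) (n : ℕ) :
    convPow (reproMeasure θ) (n + 1) = volume.withDensity (dens θ n) := by
  induction n with
  | zero =>
    show (convPow (reproMeasure θ) 0).conv (reproMeasure θ) = _
    rw [show convPow (reproMeasure θ) 0 = Measure.dirac 0 from rfl, repro_eq θ]
    simp
  | succ n ih =>
    show (convPow (reproMeasure θ) (n+1)).conv (reproMeasure θ) = _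
    rw [ih, repro_eq θ, withDensity_conv _ _ (dens_measurable θ n) (dens_measurable θ 0)]
    congr 1; funext x; exact convDens θ n x

lemma exp_tsum (x : ℝ) : ∑' n : ℕ, x ^ n / (n.factorial : ℝ) = Real.exp x := by
  rw [Real.exp_eq_exp_ℝ, NormedSpace.exp_eq_tsum_div]

lemma dens_tsum (θ : ℝ) (x : ℝ) (hx : 0 ≤ x) :
    ∑' n : ℕ, dens θ n x = ENNReal.ofReal (Real.exp ((1 - θ) * x)) := by
  unfold dens
  simp only [if_pos hx, mul_div_assoc]
  rw [← ENNReal.ofReal_tsum_of_nonneg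
      (fun n => by have := pow_nonneg hx n; positivity)
      ((Real.summable_pow_div_factorial x).mul_left _)]
  rw [tsum_mul_left, exp_tsum, ← Real.exp_add]
  congr 2
  ring

theorem mean_of_general_branching' (θ : ℝ) (t : ℝ) (ht : 0 ≤ t) :
    meanYule θ t = 1 + ∫ x in Set.Icc (0:ℝ) t, Real.exp ((1 - θ) * x) := by
  have hInonneg : 0 ≤ ∫ x in Set.Icc (0:ℝ) t, Real.exp ((1 - θ) * x) :=
    integral_nonneg fun x => (Real.exp_pos _).le
  have hIint : IntegrableOn (fun x => Real.exp ((1 - θ) * x)) (Set.Icc 0 t) volume :=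
    Continuous.integrableOn_Icc (by fun_prop)
  have h0 : convPow (reproMeasure θ) 0 (Set.Icc 0 t) = 1 := by
    rw [show convPow (reproMeasure θ) 0 = Measure.dirac 0 from rfl]
    exact Measure.dirac_apply_of_mem (Set.mem_Icc.mpr ⟨le_refl 0, ht⟩)
  have htail : ∑' n : ℕ, convPow (reproMeasure θ) (n + 1) (Set.Icc 0 t)
      = ENNReal.ofReal (∫ x in Set.Icc (0:ℝ) t, Real.exp ((1 - θ) * x)) := by
    have hrw : ∀ n : ℕ, convPow (reproMeasure θ) (n + 1) (Set.Icc 0 t)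
        = ∫⁻ x in Set.Icc 0 t, dens θ n x := fun n => by
      rw [convPow_succ_eq, withDensity_apply _ measurableSet_Icc]
    simp only [hrw]
    rw [← lintegral_tsum fun n => (dens_measurable θ n).aemeasurable]
    rw [ofReal_integral_eq_lintegral_ofReal hIint
      (ae_of_all _ fun x => (Real.exp_pos _).le)]
    refine setLIntegral_congr_fun measurableSet_Icc (fun x hx => ?_)
    exact dens_tsum θ x (Set.mem_Icc.mp hx).1
  have hsum : ∑' n : ℕ, convPow (reproMeasure θ) n (Set.Icc 0 t)
      = 1 + ENNReal.ofReal (∫ x in Set.Icc (0:ℝ) t, Real.exp ((1 - θ) * x)) := by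
    have := tsum_eq_zero_add' (f := fun n : ℕ => convPow (reproMeasure θ) n (Set.Icc 0 t))
      ENNReal.summable
    rw [this]
    simp only [h0, htail]
  unfold meanYule
  rw [hsum, ENNReal.toReal_add (by simp) ENNReal.ofReal_ne_top]
  simp [ENNReal.toReal_ofReal hInonneg]

/-- First moment of the general branching process `Y_θ` with reproduction
intensity `e^{-θa} da` (whose mean, summing the `n`-fold convolutions of the
reproduction measure over generations, is `meanYule θ t`):
`E[Y_θ(t)] = (e^{(1−θ)t} − θ)/(1−θ)` for `θ ≠ 1`, and `1 + t` for `θ = 1`. -/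
theorem mean_of_general_branching (θ : ℝ) (t : ℝ) (ht : 0 ≤ t) :
    (θ ≠ 1 → meanYule θ t = (Real.exp ((1 - θ) * t) - θ) / (1 - θ)) ∧
      (θ = 1 → meanYule θ t = 1 + t) := by
  rw [mean_of_general_branching' θ t ht]
  constructor
  · intro hθ
    have hc : (1 : ℝ) - θ ≠ 0 := sub_ne_zero.mpr (Ne.symm hθ)
    have hI : ∫ x in Set.Icc (0:ℝ) t, Real.exp ((1 - θ) * x)
        = (Real.exp ((1 - θ) * t) - 1) / (1 - θ) := by
      rw [MeasureTheory.integral_Icc_eq_integral_Ioc, ← intervalIntegral.integral_of_le ht,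
        intervalIntegral.integral_comp_mul_left (fun u => Real.exp u) hc]
      simp [integral_exp, Real.exp_zero, smul_eq_mul]
      ring
    rw [hI]
    field_simp
    ring
  · intro hθ
    subst hθ
    simp [Real.volume_Icc, ht, ENNReal.toReal_ofReal]
end

section
/- For every μ > 0, the Borel probabilities sum as follows: Σ_{n≥1} e^{-μn}(μn)^{n-1}/n! = 1 if μ ≤ 1, and the sum is strictly less than 1 if μ > 1. -/
open Real Filter fwdDiff
open scoped NNReal ENNReal

noncomputable def borelC (n : ℕ) : ℝ := if n = 0 then 0 else (n : ℝ) ^ (n - 1) / n.factorial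

noncomputable def treeF (x : ℝ) : ℝ := ∑' n : ℕ, borelC n * x ^ n


lemma borelC_zero : borelC 0 = 0 := rfl

lemma borelC_one : borelC 1 = 1 := by norm_num [borelC]

lemma borelC_nonneg (n : ℕ) : 0 ≤ borelC n := by
  unfold borelC
  split
  · exact le_refl 0
  · positivity

lemma stirling_bound (n : ℕ) (hn : n ≠ 0) :
    Real.sqrt (2 * n) * ((n : ℝ) / exp 1) ^ n ≤ n.factorial := by
  obtain ⟨m, rfl⟩ := Nat.exists_eq_succ_of_ne_zero hn
  rw [Nat.succ_eq_add_one]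
  have h1 : Real.sqrt π ≤ Stirling.stirlingSeq (m + 1) :=
    Stirling.stirlingSeq'_antitone.le_of_tendsto
      (Stirling.tendsto_stirlingSeq_sqrt_pi.comp (tendsto_add_atTop_nat 1)) m
  have h2 : (1 : ℝ) ≤ Real.sqrt π := by
    rw [show (1:ℝ) = Real.sqrt 1 by simp]
    exact Real.sqrt_le_sqrt (by linarith [Real.pi_gt_three])
  have hpos : 0 < Real.sqrt (2 * ((m + 1 : ℕ) : ℝ)) * (((m + 1 : ℕ) : ℝ) / exp 1) ^ (m + 1) := by
    positivity
  rw [Stirling.stirlingSeq] at h1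
  exact (one_le_div hpos).1 (le_trans h2 h1)

lemma borelC_exp_le (n : ℕ) : borelC n * exp (-1) ^ n ≤ ((n : ℝ) * Real.sqrt (2 * n))⁻¹ := by
  rcases eq_or_ne n 0 with rfl | hn
  · simp [borelC]
  · have hn1 : 1 ≤ n := Nat.one_le_iff_ne_zero.2 hn
    have hnp : (0:ℝ) < n := by exact_mod_cast Nat.pos_of_ne_zero hn
    have hs : (0:ℝ) < Real.sqrt (2 * n) := Real.sqrt_pos.2 (by positivity)
    have hfac : (0:ℝ) < n.factorial := by exact_mod_cast n.factorial_pos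
    have key : ((n:ℝ) ^ (n - 1) * exp (-1) ^ n) * ((n:ℝ) * Real.sqrt (2 * n)) =
        Real.sqrt (2 * n) * ((n : ℝ) / exp 1) ^ n := by
      have hpow : ((n:ℝ) / exp 1) ^ n = (n:ℝ) ^ n * exp (-1) ^ n := by
        rw [div_pow, exp_neg]; ring
      have hnn : (n:ℝ) ^ n = (n:ℝ) ^ (n - 1) * n := by
        rw [← pow_succ, Nat.sub_add_cancel hn1]
      rw [hpow, hnn]; ring
    have hb : borelC n = (n:ℝ) ^ (n - 1) / n.factorial := by simp [borelC, hn]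
    rw [hb, div_mul_eq_mul_div, div_le_iff₀ hfac]
    calc (n:ℝ) ^ (n - 1) * exp (-1) ^ n
        = ((n:ℝ) * Real.sqrt (2 * n))⁻¹ * (((n:ℝ) * Real.sqrt (2 * n)) *
            ((n:ℝ) ^ (n - 1) * exp (-1) ^ n)) := by
          rw [inv_mul_cancel_left₀ (ne_of_gt (by positivity))]
      _ = ((n:ℝ) * Real.sqrt (2 * n))⁻¹ * (Real.sqrt (2 * n) * ((n : ℝ) / exp 1) ^ n) := by
          rw [← key]; ring
      _ ≤ ((n:ℝ) * Real.sqrt (2 * n))⁻¹ * n.factorial :=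
          mul_le_mul_of_nonneg_left (stirling_bound n hn) (by positivity)

lemma summable_aux : Summable (fun n : ℕ => ((n : ℝ) * Real.sqrt (2 * n))⁻¹) := by
  have hsum : Summable (fun n : ℕ => ((n : ℝ) ^ (3/2 : ℝ))⁻¹) :=
    Real.summable_nat_rpow_inv.2 (by norm_num)
  refine hsum.of_nonneg_of_le (fun n => by positivity) (fun n => ?_)
  rcases eq_or_ne n 0 with rfl | hn
  · simp
  · have hnp : (0:ℝ) < n := by exact_mod_cast Nat.pos_of_ne_zero hn
    have h32 : (n:ℝ) ^ (3/2 : ℝ) = (n:ℝ) * Real.sqrt n := by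
      rw [show (3/2 : ℝ) = 1 + 1/2 by norm_num, Real.rpow_add hnp, Real.rpow_one,
        ← Real.sqrt_eq_rpow]
    apply inv_anti₀ (by rw [h32]; positivity)
    rw [h32]
    gcongr
    linarith

lemma summable_borelC_exp : Summable (fun n : ℕ => borelC n * exp (-1) ^ n) :=
  summable_aux.of_nonneg_of_le
    (fun n => mul_nonneg (borelC_nonneg n) (by positivity)) borelC_exp_le

lemma summable_borelC {x : ℝ} (hx : |x| ≤ exp (-1)) :
    Summable (fun n : ℕ => borelC n * x ^ n) := by
  refine summable_borelC_exp.of_norm_bounded (fun n => ?_)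
  rw [Real.norm_eq_abs, abs_mul, abs_pow, abs_of_nonneg (borelC_nonneg n)]
  exact mul_le_mul_of_nonneg_left (pow_le_pow_left₀ (abs_nonneg x) hx n) (borelC_nonneg n)

noncomputable def treeP : FormalMultilinearSeries ℝ ℝ ℝ :=
  FormalMultilinearSeries.ofScalars ℝ borelC

lemma treeF_eq_sum : treeF = treeP.sum := by
  funext x
  simp only [treeF, treeP, FormalMultilinearSeries.sum,
    FormalMultilinearSeries.ofScalars_apply_eq, smul_eq_mul]

lemma treeP_radius : ((exp (-1)).toNNReal : ENNReal) ≤ treeP.radius := by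
  apply treeP.le_radius_of_summable_norm
  have : (((exp (-1)).toNNReal : ℝ≥0) : ℝ) = exp (-1) := Real.coe_toNNReal _ (exp_nonneg _)
  simp only [treeP, FormalMultilinearSeries.ofScalars_norm, Real.norm_eq_abs, this]
  refine summable_borelC_exp.congr (fun n => ?_)
  rw [abs_of_nonneg (borelC_nonneg n)]

lemma treeF_analyticAt {x : ℝ} (hx : |x| < exp (-1)) : AnalyticAt ℝ treeF x := by
  rw [treeF_eq_sum]
  have hr : 0 < treeP.radius :=
    lt_of_lt_of_le (by simp [Real.toNNReal_pos.2 (exp_pos _)]) treeP_radius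
  refine (treeP.hasFPowerSeriesOnBall hr).analyticAt_of_mem ?_
  rw [EMetric.mem_ball, edist_zero_right]
  refine lt_of_lt_of_le ?_ treeP_radius
  rw [enorm_eq_nnnorm, ENNReal.coe_lt_coe, ← NNReal.coe_lt_coe, coe_nnnorm, Real.norm_eq_abs,
    Real.coe_toNNReal _ (exp_nonneg _)]
  exact hx

lemma fwdDiff_pow_eq_zero : ∀ j m : ℕ, j < m → (fwdDiff (1:ℝ))^[m] (fun x : ℝ => x ^ j) = 0 := by
  intro j
  induction j using Nat.strong_induction_on with
  | _ j IH =>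
    intro m hjm
    obtain ⟨m', rfl⟩ : ∃ m', m = m' + 1 := ⟨m - 1, (Nat.succ_pred_eq_of_pos (by omega)).symm⟩
    rw [Function.iterate_succ_apply]
    have hΔ : fwdDiff (1:ℝ) (fun x : ℝ => x ^ j) =
        ∑ i ∈ Finset.range j, (j.choose i : ℝ) • fun x : ℝ => x ^ i := by
      funext x
      simp only [fwdDiff, Finset.sum_apply, Pi.smul_apply, smul_eq_mul]
      rw [add_pow]
      simp only [one_pow, mul_one]
      rw [Finset.sum_range_succ]
      simp [mul_comm]
    rw [hΔ, fwdDiff_iter_finset_sum]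
    refine Finset.sum_eq_zero (fun i hi => ?_)
    have hij := Finset.mem_range.1 hi
    rw [fwdDiff_iter_const_smul, IH i hij m' (by omega)]
    simp

lemma alt_sum_eq_zero {m : ℕ} (hm : 2 ≤ m) :
    ∑ n ∈ Finset.range (m + 1), (-1:ℝ)^(m-n) * (m.choose n) * (n:ℝ)^(m-1) = 0 := by
  have h := fwdDiff_iter_eq_sum_shift (1:ℝ) (fun x : ℝ => x ^ (m-1)) m 0
  rw [fwdDiff_pow_eq_zero (m-1) m (by omega)] at h
  simp only [Pi.zero_apply, zero_add, smul_eq_mul, nsmul_eq_mul, mul_one] at h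
  calc ∑ n ∈ Finset.range (m + 1), (-1:ℝ)^(m-n) * (m.choose n) * (n:ℝ)^(m-1)
      = ∑ k ∈ Finset.range (m + 1),
          (((-1:ℤ)^(m-k) * (m.choose k) : ℤ) • ((k:ℝ)) ^ (m-1)) := by
        refine Finset.sum_congr rfl fun n _ => ?_
        rw [zsmul_eq_mul]
        push_cast
        ring
    _ = 0 := h.symm

lemma exp_hasSum (x : ℝ) : HasSum (fun k : ℕ => x ^ k / k.factorial) (exp x) := by
  rw [Real.exp_eq_exp_ℝ]
  exact NormedSpace.expSeries_div_hasSum_exp x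

lemma treeF_small {t : ℝ} (ht : 0 < t) (ht8 : t ≤ 1/8) :
    treeF (t * exp (-t)) = t := by
  have he1 := Real.exp_one_lt_d9
  have he2 := Real.exp_one_gt_d9
  have hte : t * exp t ≤ exp (-1) := by
    have h1 : exp t ≤ exp 1 := exp_le_exp.2 (by linarith)
    have h2 : t * exp t ≤ (1/8) * exp 1 :=
      mul_le_mul ht8 h1 (exp_pos t).le (by norm_num)
    have h3 : (1/8) * exp 1 ≤ exp (-1) := by
      rw [exp_neg, ← mul_le_mul_iff_right₀ (exp_pos 1), mul_inv_cancel₀ (exp_pos 1).ne']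
      nlinarith
    linarith
  have htne : |t * exp t| ≤ exp (-1) := by
    rw [abs_of_nonneg (by positivity)]; exact hte
  have htn2 : |t * exp (-t)| ≤ exp (-1) := by
    rw [abs_of_nonneg (by positivity)]
    have : exp (-t) ≤ exp t := exp_le_exp.2 (by linarith)
    nlinarith [exp_pos t]
  -- the double-indexed family
  set a : ℕ × ℕ → ℝ :=
    fun p => borelC p.1 * t ^ p.1 * ((-(p.1:ℝ) * t) ^ p.2 / p.2.factorial) with ha
  have habs : ∀ p : ℕ × ℕ, |a p| = borelC p.1 * t ^ p.1 * (((p.1:ℝ) * t) ^ p.2 / p.2.factorial) := by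
    rintro ⟨n, k⟩
    simp only [ha]
    rw [abs_mul, abs_mul, abs_div, abs_pow, abs_pow, abs_of_nonneg (borelC_nonneg n),
      abs_of_nonneg ht.le, Nat.abs_cast, abs_mul, abs_neg, Nat.abs_cast, abs_of_nonneg ht.le]
  have hrow : ∀ n : ℕ, HasSum (fun k => |a (n, k)|) (borelC n * (t * exp t) ^ n) := by
    intro n
    have h := ((exp_hasSum ((n:ℝ) * t)).mul_left (borelC n * t ^ n))
    have : borelC n * t ^ n * exp ((n:ℝ) * t) = borelC n * (t * exp t) ^ n := by
      rw [mul_pow, ← exp_nat_mul]; ring_nf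
    rw [this] at h
    refine h.congr_fun (fun k => ?_)
    rw [habs (n, k)]
  have habs_sum : Summable (fun p : ℕ × ℕ => |a p|) := by
    refine (summable_prod_of_nonneg (fun p => abs_nonneg _)).2 ⟨fun n => (hrow n).summable, ?_⟩
    refine ((summable_borelC htne).congr (fun n => ?_))
    exact ((hrow n).tsum_eq).symm
  have hsum_a : Summable a := summable_abs_iff.1 habs_sum
  -- first evaluation: sum over rows gives treeF (t * exp (-t))
  have heval1 : ∑' p : ℕ × ℕ, a p = treeF (t * exp (-t)) := by
    rw [Summable.tsum_prod' hsum_a (fun n => (hsum_a.prod_factor n))]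
    unfold treeF
    refine tsum_congr (fun n => ?_)
    have h := ((exp_hasSum (-(n:ℝ) * t)).mul_left (borelC n * t ^ n))
    have heq : borelC n * t ^ n * exp (-(n:ℝ) * t) = borelC n * (t * exp (-t)) ^ n := by
      rw [mul_pow, ← exp_nat_mul]; ring_nf
    rw [heq] at h
    exact h.tsum_eq
  -- reindex along diagonals
  set e : ℕ × ℕ → ℕ × ℕ := fun p => (p.1 + p.2, p.1) with hee
  have he_inj : Function.Injective e := by
    rintro ⟨n, k⟩ ⟨n', k'⟩ h
    simp only [hee, Prod.mk.injEq] at h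
    refine Prod.ext h.2 (by omega)
  set d : ℕ × ℕ → ℝ := fun q => if q.2 ≤ q.1 then a (q.2, q.1 - q.2) else 0 with hd
  have hde : ∀ p : ℕ × ℕ, d (e p) = a p := by
    rintro ⟨n, k⟩
    simp only [hd, hee, Nat.le_add_right, if_true, Nat.add_sub_cancel_left]
  have hsupp : Function.support d ⊆ Set.range e := by
    rintro ⟨m, n⟩ hq
    have hnm : n ≤ m := by
      by_contra hc
      exact hq (by simp [hd, hc])
    exact ⟨(n, m - n), by simp [hee, Nat.add_sub_cancel' hnm]⟩
  have heval2 : ∑' q : ℕ × ℕ, d q = ∑' p : ℕ × ℕ, a p := by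
    rw [← he_inj.tsum_eq hsupp]
    exact tsum_congr hde
  have hsum_d : Summable d := by
    rw [← he_inj.summable_iff (fun x hx => Function.notMem_support.1 (fun hs => hx (hsupp hs)))]
    exact hsum_a.congr (fun p => (hde p).symm)
  have hrow_d : ∀ m : ℕ, ∑' n : ℕ, d (m, n) = ∑ n ∈ Finset.range (m + 1), d (m, n) := by
    intro m
    refine tsum_eq_sum (fun n hn => ?_)
    rw [Finset.mem_range, not_lt] at hn
    simp only [hd]
    rw [if_neg (by omega)]
  have heval3 : ∑' q : ℕ × ℕ, d q = ∑' m : ℕ, ∑ n ∈ Finset.range (m + 1), d (m, n) := by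
    rw [Summable.tsum_prod' hsum_d (fun m => hsum_d.prod_factor m)]
    exact tsum_congr hrow_d
  -- compute the diagonal sums
  have hdiag : ∀ m : ℕ, ∑ n ∈ Finset.range (m + 1), d (m, n) = if m = 1 then t else 0 := by
    intro m
    match m with
    | 0 => simp [hd, ha, borelC]
    | 1 => norm_num [Finset.sum_range_succ, hd, ha, borelC]
    | (k+2) =>
      rw [if_neg (by omega)]
      have hM : 2 ≤ k + 2 := by omega
      have h1 : ∀ n ∈ Finset.range (k + 2 + 1), d (k+2, n)
          = ((-1:ℝ)^(k+2-n) * ((k+2).choose n) * (n:ℝ)^(k+2-1)) *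
            (t^(k+2) / (k+2).factorial) := by
        intro n hn
        have hn' : n ≤ k + 2 := by
          rw [Finset.mem_range, Nat.lt_succ_iff] at hn; exact hn
        simp only [hd, if_pos hn', ha]
        rcases Nat.eq_zero_or_pos n with rfl | hnpos
        · simp [borelC, zero_pow]
        · have hb : borelC n = (n:ℝ)^(n-1) / n.factorial := by
            simp [borelC, Nat.pos_iff_ne_zero.1 hnpos]
          have e1 : (n:ℝ)^(k+2-1) = (n:ℝ)^(n-1) * (n:ℝ)^(k+2-n) := by
            rw [← pow_add]; congr 1; omega
          have e2 : (t:ℝ)^(k+2) = t^n * t^(k+2-n) := by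
            rw [← pow_add]; congr 1; omega
          rw [hb, Nat.cast_choose ℝ hn', e1, e2,
            show (-(n:ℝ)*t) = (-1) * ((n:ℝ)*t) by ring, mul_pow, mul_pow]
          have f1 : (n.factorial : ℝ) ≠ 0 := by positivity
          have f2 : ((k+2-n).factorial : ℝ) ≠ 0 := by positivity
          have f3 : (((k+2).factorial) : ℝ) ≠ 0 := by positivity
          field_simp
      rw [Finset.sum_congr rfl h1, ← Finset.sum_mul, alt_sum_eq_zero hM, zero_mul]
  rw [← heval1, ← heval2, heval3]
  rw [tsum_congr hdiag, tsum_ite_eq]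

lemma g_lt {t : ℝ} (ht1 : t ≠ 1) : t * exp (-t) < exp (-1) := by
  have h := Real.add_one_lt_exp (sub_ne_zero.2 ht1)
  have h2 : t < exp (t - 1) := by linarith
  calc t * exp (-t) < exp (t - 1) * exp (-t) := by
        exact mul_lt_mul_of_pos_right h2 (exp_pos _)
    _ = exp (-1) := by rw [← exp_add]; ring_nf

lemma g_analyticAt (t : ℝ) : AnalyticAt ℝ (fun s : ℝ => s * exp (-s)) t :=
  analyticAt_id.mul (analyticAt_rexp.comp analyticAt_id.neg)

lemma treeF_eq {t : ℝ} (ht : 0 < t) (ht1 : t < 1) : treeF (t * exp (-t)) = t := by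
  have H : AnalyticOnNhd ℝ (fun s : ℝ => treeF (s * exp (-s)) - s) (Set.Ioo 0 1) := by
    intro s hs
    have habs : |s * exp (-s)| < exp (-1) := by
      rw [abs_of_nonneg (mul_nonneg hs.1.le (exp_pos _).le)]
      exact g_lt (ne_of_lt hs.2)
    have hF : AnalyticAt ℝ treeF ((fun s : ℝ => s * exp (-s)) s) := treeF_analyticAt habs
    exact (AnalyticAt.comp (f := fun s : ℝ => s * exp (-s)) (x := s) hF (g_analyticAt s)).sub analyticAt_id
  have hz : (fun s : ℝ => treeF (s * exp (-s)) - s) =ᶠ[nhds (1/16 : ℝ)] 0 := by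
    filter_upwards [Ioo_mem_nhds (by norm_num : (0:ℝ) < 1/16) (by norm_num : (1/16:ℝ) < 1/8)]
      with s hs
    simp [treeF_small hs.1 (le_of_lt hs.2)]
  have := H.eqOn_zero_of_preconnected_of_eventuallyEq_zero isPreconnected_Ioo
    (by norm_num : (1/16 : ℝ) ∈ Set.Ioo (0:ℝ) 1) hz ⟨ht, ht1⟩
  simpa [sub_eq_zero] using this

lemma treeF_continuousOn :
    ContinuousOn treeF (Set.Icc (-(exp (-1))) (exp (-1))) := by
  refine continuousOn_tsum (fun n => (continuous_const.mul (continuous_pow n)).continuousOn)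
    summable_borelC_exp (fun n x hx => ?_)
  have hax : |x| ≤ exp (-1) := abs_le.2 ⟨hx.1, hx.2⟩
  rw [Real.norm_eq_abs, abs_mul, abs_pow, abs_of_nonneg (borelC_nonneg n)]
  exact mul_le_mul_of_nonneg_left (pow_le_pow_left₀ (abs_nonneg x) hax n) (borelC_nonneg n)

lemma treeF_endpoint : treeF (exp (-1)) = 1 := by
  have h1 : Tendsto (fun t : ℝ => t * exp (-t)) (nhdsWithin 1 (Set.Iio 1))
      (nhdsWithin (exp (-1)) (Set.Icc (-(exp (-1))) (exp (-1)))) := by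
    apply tendsto_nhdsWithin_of_tendsto_nhds_of_eventually_within
    · have hc : Continuous (fun t : ℝ => t * exp (-t)) := by continuity
      have := hc.tendsto 1
      simpa using this.mono_left nhdsWithin_le_nhds
    · filter_upwards [Ioo_mem_nhdsLT_of_mem
        (by norm_num : (1:ℝ) ∈ Set.Ioc (0:ℝ) 1)] with t htm
      constructor
      · have : (0:ℝ) ≤ t * exp (-t) := mul_nonneg htm.1.le (exp_pos _).le
        linarith [exp_pos (-1 : ℝ)]
      · exact (g_lt (ne_of_lt htm.2)).le
  have h2 : Tendsto (fun t : ℝ => treeF (t * exp (-t))) (nhdsWithin 1 (Set.Iio 1))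
      (nhds (treeF (exp (-1)))) := by
    have hmem : exp (-1) ∈ Set.Icc (-(exp (-1))) (exp (-1)) := by
      constructor <;> linarith [exp_pos (-1:ℝ)]
    exact (treeF_continuousOn (exp (-1)) hmem).tendsto.comp h1
  have h3 : Tendsto (fun t : ℝ => treeF (t * exp (-t))) (nhdsWithin 1 (Set.Iio 1))
      (nhds 1) := by
    have hid : Tendsto (fun t : ℝ => t) (nhdsWithin 1 (Set.Iio 1)) (nhds (1:ℝ)) :=
      tendsto_id.mono_left nhdsWithin_le_nhds
    refine hid.congr' ?_
    filter_upwards [Ioo_mem_nhdsLT_of_mem (by norm_num : (1:ℝ) ∈ Set.Ioc (0:ℝ) 1)] with t htm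
    exact (treeF_eq htm.1 htm.2).symm
  exact tendsto_nhds_unique h2 h3


/-- The Borel distribution weight at `n ≥ 1` with parameter `μ`:
`e^{-μn}(μn)^{n-1}/n!`. Here indexed by `n = m + 1` with `m : ℕ`. -/
noncomputable def borelWeight (μ : ℝ) (n : ℕ) : ℝ :=
  Real.exp (-μ * n) * (μ * n) ^ (n - 1) / n.factorial



lemma weight_eq (μ : ℝ) (m : ℕ) :
    borelWeight μ (m + 1) = μ⁻¹ * (borelC (m + 1) * (μ * exp (-μ)) ^ (m + 1)) ∨ μ = 0 := by
  rcases eq_or_ne μ 0 with rfl | hμ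
  · right; rfl
  left
  unfold borelWeight borelC
  rw [if_neg (Nat.succ_ne_zero m)]
  rw [mul_pow μ (exp (-μ)), ← Real.exp_nat_mul,
    show ((m+1:ℕ):ℝ) * -μ = -μ * ((m+1:ℕ):ℝ) by ring, Nat.add_sub_cancel, mul_pow]
  field_simp
  ring

lemma sum_weights (μ : ℝ) (hμ : 0 < μ) (ν : ℝ) (hg : μ * exp (-μ) = ν * exp (-ν))
    (hν : |ν * exp (-ν)| ≤ exp (-1)) :
    ∑' m : ℕ, borelWeight μ (m + 1) = μ⁻¹ * treeF (ν * exp (-ν)) := by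
  have hw : ∀ m : ℕ, borelWeight μ (m + 1)
      = μ⁻¹ * (borelC (m + 1) * (ν * exp (-ν)) ^ (m + 1)) := by
    intro m
    rcases weight_eq μ m with h | h
    · rw [h, hg]
    · exact absurd h hμ.ne'
  calc ∑' m : ℕ, borelWeight μ (m + 1)
      = ∑' m : ℕ, μ⁻¹ * (borelC (m + 1) * (ν * exp (-ν)) ^ (m + 1)) := tsum_congr hw
    _ = μ⁻¹ * ∑' m : ℕ, borelC (m + 1) * (ν * exp (-ν)) ^ (m + 1) := tsum_mul_left
    _ = μ⁻¹ * treeF (ν * exp (-ν)) := by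
        congr 1
        have hs := summable_borelC hν
        have h0 := Summable.tsum_eq_zero_add hs
        rw [show borelC 0 * (ν * exp (-ν)) ^ 0 = 0 by simp [borelC], zero_add] at h0
        exact h0.symm

/-- For `μ > 0`, the Borel weights `∑_{n≥1} e^{-μn}(μn)^{n-1}/n!` sum to `1`
if `μ ≤ 1`, and to strictly less than `1` if `μ > 1`. -/
theorem borel_sum (μ : ℝ) (hμ : 0 < μ) :
    (μ ≤ 1 → ∑' m : ℕ, borelWeight μ (m + 1) = 1) ∧
      (1 < μ → ∑' m : ℕ, borelWeight μ (m + 1) < 1) := by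
  constructor
  · intro hμ1
    rcases eq_or_lt_of_le hμ1 with rfl | hlt
    · have h := sum_weights 1 one_pos 1 rfl (by
        rw [abs_of_nonneg (mul_nonneg one_pos.le (exp_pos _).le)]
        simp)
      rw [h, one_mul, inv_one, treeF_endpoint]
      norm_num
    · have habs : |μ * exp (-μ)| ≤ exp (-1) := by
        rw [abs_of_nonneg (mul_nonneg hμ.le (exp_pos _).le)]
        exact (g_lt hlt.ne).le
      rw [sum_weights μ hμ μ rfl habs, treeF_eq hμ hlt, inv_mul_cancel₀ hμ.ne']
  · intro hμ1
    have hy0 : 0 < μ * exp (-μ) := mul_pos hμ (exp_pos _)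
    have hylt : μ * exp (-μ) < exp (-1) := g_lt hμ1.ne'
    -- find the conjugate parameter ν ∈ (0,1)
    have hc : ContinuousOn (fun s : ℝ => s * exp (-s)) (Set.Icc 0 1) :=
      (continuous_id.mul (Real.continuous_exp.comp continuous_neg)).continuousOn
    have himage := intermediate_value_Icc (by norm_num : (0:ℝ) ≤ 1) hc
    have hmem : μ * exp (-μ) ∈ Set.Icc ((fun s : ℝ => s * exp (-s)) 0)
        ((fun s : ℝ => s * exp (-s)) 1) := by
      simp only
      constructor
      · simp [hy0.le]
      · simp only [one_mul]
        exact hylt.le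
    obtain ⟨ν, hνIcc, hνeq⟩ := himage hmem
    have hν0 : 0 < ν := by
      rcases eq_or_lt_of_le hνIcc.1 with rfl | h
      · exfalso; simp only [zero_mul] at hνeq; linarith
      · exact h
    have hν1 : ν < 1 := by
      rcases eq_or_lt_of_le hνIcc.2 with rfl | h
      · exfalso
        simp only [one_mul] at hνeq
        linarith
      · exact h
    have habs : |ν * exp (-ν)| ≤ exp (-1) := by
      rw [abs_of_nonneg (mul_nonneg hν0.le (exp_pos _).le)]
      exact (g_lt hν1.ne).le
    rw [sum_weights μ hμ ν hνeq.symm habs, treeF_eq hν0 hν1]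
    rw [inv_mul_eq_div, div_lt_one hμ]
    linarith
end

section
/- Let N be a standard Poisson process, b > 1, x > 0, and ν(x) = inf{t > 0 : bt − N(t) > x}. Then for every integer n ≥ 0, P(bν(x) − x = n) = (1/n!)·e^{-(x+n)/b}·x·(x+n)^{n-1}·b^{-n}. -/
open MeasureTheory ProbabilityTheory

/-- A standard (rate one) Poisson process: monotone right-continuous `ℕ`-valued
paths started from `0`, with independent increments, the increment over
`[s,t]` being Poisson distributed with parameter `t - s`. -/
structure IsStdPoissonProcess {Ω : Type*} [MeasurableSpace Ω] (P : Measure Ω)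
    (N : ℝ → Ω → ℕ) : Prop where
  isProb : IsProbabilityMeasure P
  meas : ∀ t, Measurable (N t)
  init : ∀ ω, N 0 ω = 0
  mono : ∀ ω, MonotoneOn (fun t => N t ω) (Set.Ici 0)
  rightCont : ∀ ω, ∀ t ≥ (0:ℝ), ∃ ε > 0, ∀ s ∈ Set.Ico t (t + ε), N s ω = N t ω
  indepIncr : ∀ (n : ℕ) (t : ℕ → ℝ), Monotone t → (∀ i, 0 ≤ t i) →
    iIndepFun
      (fun (i : Fin n) ω => N (t (i + 1)) ω - N (t i) ω) P
  poissonIncr : ∀ s t : ℝ, 0 ≤ s → s ≤ t → ∀ k : ℕ,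
    P {ω | N t ω - N s ω = k} =
      ENNReal.ofReal (Real.exp (-(t - s)) * (t - s) ^ k / k.factorial)

/-- First passage time of the drifted process `t ↦ b t − N(t)` above level `x`. -/
noncomputable def nu {Ω : Type*} (N : ℝ → Ω → ℕ) (b x : ℝ) (ω : Ω) : ℝ :=
  sInf {t : ℝ | 0 < t ∧ x < b * t - N t ω}

open Finset fwdDiff Polynomial

lemma fd_zero_fun (n : ℕ) : (fwdDiff (1:ℝ))^[n] (fun _ : ℝ => (0:ℝ)) = fun _ => 0 := by
  induction n with
  | zero => rfl
  | succ n ih => rw [Function.iterate_succ_apply]; convert ih using 2; funext t; simp [fwdDiff]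

lemma fd_poly_zero (n : ℕ) (p : Polynomial ℝ) (hp : p.natDegree < n) :
    (fwdDiff (1:ℝ))^[n] (fun t => p.eval t) = fun _ => 0 := by
  induction n generalizing p with
  | zero => omega
  | succ n ih =>
    rw [Function.iterate_succ_apply]
    set q : Polynomial ℝ := p.comp (X + C 1) - p with hq
    have hΔ : fwdDiff (1:ℝ) (fun t => p.eval t) = fun t => q.eval t := by
      funext t; simp [fwdDiff, hq, eval_comp, add_comm]
    rw [hΔ]
    by_cases h0 : p.natDegree = 0
    · obtain ⟨c, rfl⟩ := Polynomial.natDegree_eq_zero.mp h0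
      have : q = 0 := by simp [hq]
      rw [this]; simpa using fd_zero_fun n
    · have hpne : p ≠ 0 := fun h => h0 (by simp [h])
      have hlc : (p.comp (X + C 1)).leadingCoeff = p.leadingCoeff := by
        rw [Polynomial.leadingCoeff_comp (by rw [Polynomial.natDegree_X_add_C]; exact one_ne_zero)]
        rw [(Polynomial.monic_X_add_C (1:ℝ)).leadingCoeff, one_pow, mul_one]
      have hcompne : p.comp (X + C 1) ≠ 0 := by
        intro h; apply hpne
        rw [← Polynomial.leadingCoeff_eq_zero, ← hlc, h, Polynomial.leadingCoeff_zero]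
      have hdeg : (p.comp (X + C 1)).degree = p.degree := by
        rw [Polynomial.degree_eq_natDegree hcompne, Polynomial.degree_eq_natDegree hpne,
          Polynomial.natDegree_comp, Polynomial.natDegree_X_add_C, mul_one]
      have hqd : q.degree < p.degree := hdeg ▸ Polynomial.degree_sub_lt hdeg hcompne hlc
      by_cases hq0 : q = 0
      · rw [hq0]; simpa using fd_zero_fun n
      · exact ih q (by
          have := Polynomial.natDegree_lt_natDegree hq0 hqd
          omega)

lemma alt_sum (n : ℕ) (hn : 1 ≤ n) (x : ℝ) :
    ∑ k ∈ range (n+1), (-1:ℝ)^(n-k) * (n.choose k) * (x + k)^(n-1) = 0 := by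
  have h := fd_poly_zero n ((X + C x)^(n-1)) (by
    simpa [Polynomial.natDegree_pow, Polynomial.natDegree_X_add_C] using by omega)
  have h2 := fwdDiff_iter_eq_sum_shift (1:ℝ) (fun t => (((X + C x)^(n-1) : Polynomial ℝ)).eval t) n 0
  rw [congrFun h 0] at h2
  rw [← h2.symm]
  refine Finset.sum_congr rfl fun k hk => ?_
  simp only [eval_pow, eval_add, eval_X, eval_C, zsmul_eq_mul, nsmul_eq_mul]
  push_cast
  ring

lemma choose_id (n j : ℕ) (hj : j < n) :
    (n - j) * (n+1).choose (j+1) = (n+1) * n.choose (j+1) := by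
  have h1 : (n+1).choose (n-j) = (n+1).choose (j+1) := by
    have := Nat.choose_symm (n := n+1) (k := j+1) (by omega)
    rwa [show n + 1 - (j+1) = n - j from by omega] at this
  have h2 : n.choose (n - (j+1)) = n.choose (j+1) := Nat.choose_symm (by omega)
  have h3 := Nat.add_one_mul_choose_eq n (n - j - 1)
  rw [show n - j - 1 + 1 = n - j from by omega] at h3
  rw [show n - (j+1) = n - j - 1 from by omega] at h2
  rw [← h1, ← h2, mul_comm, ← h3]

private lemma hd_pow (a : ℝ) (m : ℕ) (y : ℝ) :
    HasDerivAt (fun y : ℝ => (y + a)^m) (m * (y+a)^(m-1)) y := by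
  have h1 : HasDerivAt (fun y : ℝ => y + a) 1 y := (hasDerivAt_id y).add_const a
  simpa using h1.fun_pow m

lemma abel_aux (n : ℕ) (x : ℝ) : ∀ y : ℝ,
    (y + (x + ((n:ℕ):ℝ)))^n - (y + ((n:ℕ):ℝ))^n =
      x * ∑ j ∈ range n, (n.choose (j+1) : ℝ) * (x + 1 + j)^j *
        (y + ((n - 1 - j : ℕ):ℝ))^(n - 1 - j) := by
  induction n with
  | zero => intro y; simp
  | succ n ih =>
    set F : ℝ → ℝ := fun y => (y + (x + ((n+1 : ℕ):ℝ)))^(n+1) - (y + ((n+1:ℕ):ℝ))^(n+1) -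
      x * ∑ j ∈ range (n+1), ((n+1).choose (j+1) : ℝ) * (x + 1 + j)^j *
        (y + ((n+1 - 1 - j : ℕ):ℝ))^(n+1 - 1 - j) with hF
    have hderiv : ∀ y, HasDerivAt F 0 y := by
      intro y
      have h1 := hd_pow (x + ((n+1:ℕ):ℝ)) (n+1) y
      have h2 := hd_pow (((n+1:ℕ)):ℝ) (n+1) y
      have h3 : HasDerivAt (fun y => ∑ j ∈ range (n+1), ((n+1).choose (j+1) : ℝ) * (x + 1 + j)^j *
          (y + ((n+1 - 1 - j : ℕ):ℝ))^(n+1 - 1 - j))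
          (∑ j ∈ range (n+1), ((n+1).choose (j+1) : ℝ) * (x + 1 + j)^j *
            (((n+1-1-j : ℕ):ℝ) * (y + ((n+1 - 1 - j : ℕ):ℝ))^(n+1-1-j-1))) y :=
        HasDerivAt.fun_sum fun j _ => (hd_pow _ _ y).const_mul _
      have hcomb := (h1.sub h2).sub (h3.const_mul x)
      convert hcomb using 1
      case e'_4 => rfl
      case e'_5 => rfl
      case e'_8 => rfl
      symm
      have hsum : ∑ j ∈ range (n+1), ((n+1).choose (j+1) : ℝ) * (x + 1 + j)^j *
            (((n+1-1-j : ℕ):ℝ) * (y + ((n+1 - 1 - j : ℕ):ℝ))^(n+1-1-j-1))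
          = ((n:ℝ)+1) * ∑ j ∈ range n, (n.choose (j+1) : ℝ) * (x + 1 + j)^j *
              (y + 1 + ((n - 1 - j : ℕ):ℝ))^(n - 1 - j) := by
        rw [Finset.sum_range_succ, show n+1-1-n = 0 from by omega]
        simp only [Nat.cast_zero, zero_mul, mul_zero, add_zero]
        rw [Finset.mul_sum]
        refine Finset.sum_congr rfl fun j hj => ?_
        have hjn : j < n := Finset.mem_range.mp hj
        have hc : ((n - j : ℕ):ℝ) * ((n+1).choose (j+1) : ℝ)
            = ((n:ℝ)+1) * (n.choose (j+1) : ℝ) := by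
          exact_mod_cast congrArg (Nat.cast (R := ℝ)) (choose_id n j hjn)
        have e1 : n+1-1-j = n - j := by omega
        have e2 : n - j - 1 = n - 1 - j := by omega
        have e3 : ((n - j : ℕ):ℝ) = ((n-1-j : ℕ):ℝ) + 1 := by
          exact_mod_cast congrArg (Nat.cast (R := ℝ)) (show n - j = (n-1-j) + 1 from by omega)
        have hb : y + ((n - j : ℕ):ℝ) = y + 1 + ((n-1-j : ℕ):ℝ) := by rw [e3]; ring
        rw [e1, e2, hb]
        linear_combination ((x + 1 + (j:ℝ))^j * (y + 1 + ((n-1-j:ℕ):ℝ))^(n-1-j)) * hc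
      rw [hsum]
      have hih := ih (y+1)
      simp only [Nat.add_sub_cancel]
      push_cast at hih ⊢
      linear_combination ((n:ℝ)+1) * hih
    have hdiff : Differentiable ℝ F := fun y => (hderiv y).differentiableAt
    have hy0 : F (-(x + ((n+1:ℕ):ℝ))) = 0 := by
      rw [hF]
      simp only []
      set y0 : ℝ := -(x + ((n+1:ℕ):ℝ)) with hy0def
      have hA : (y0 + (x + ((n+1:ℕ):ℝ))) = 0 := by rw [hy0def]; ring
      have hB : y0 + ((n+1:ℕ):ℝ) = -x := by rw [hy0def]; ring
      rw [hA, hB, zero_pow (Nat.succ_ne_zero n)]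
      have hterm : ∀ j ∈ range (n+1),
          ((n+1).choose (j+1) : ℝ) * (x + 1 + j)^j * (y0 + ((n+1-1-j : ℕ):ℝ))^(n+1-1-j)
          = (-1:ℝ)^(n-j) * ((n+1).choose (j+1) : ℝ) * (x + ((j+1:ℕ):ℝ))^n := by
        intro j hj
        have hjn : j ≤ n := by have := Finset.mem_range.mp hj; omega
        have e1 : n+1-1-j = n - j := by omega
        have hbase : y0 + ((n+1-1-j : ℕ):ℝ) = -(x + ((j+1:ℕ):ℝ)) := by
          rw [e1, hy0def, Nat.cast_sub hjn]; push_cast; ring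
        have hxx : (x + 1 + (j:ℝ)) = (x + ((j+1:ℕ):ℝ)) := by push_cast; ring
        rw [hbase, e1, neg_pow, hxx]
        have hp : (x + ((j+1:ℕ):ℝ))^j * (x + ((j+1:ℕ):ℝ))^(n-j) = (x + ((j+1:ℕ):ℝ))^n := by
          rw [← pow_add]; congr 1; omega
        linear_combination ((-1:ℝ)^(n-j) * ((n+1).choose (j+1) : ℝ)) * hp
      rw [Finset.sum_congr rfl hterm]
      have halt := alt_sum (n+1) (by omega) x
      rw [Finset.sum_range_succ'] at halt
      simp only [Nat.add_sub_cancel] at halt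
      have hre : ∀ i ∈ range (n+1), (-1:ℝ)^(n+1-(i+1)) * (((n+1).choose (i+1)):ℝ) * (x+((i+1:ℕ):ℝ))^n
          = (-1:ℝ)^(n-i) * (((n+1).choose (i+1)):ℝ) * (x+((i+1:ℕ):ℝ))^n := by
        intro i _; rw [show n+1-(i+1) = n-i from by omega]
      rw [Finset.sum_congr rfl hre] at halt
      simp only [Nat.sub_zero, Nat.choose_zero_right, Nat.cast_one] at halt
      push_cast at halt ⊢
      rw [neg_pow]
      linear_combination (-x) * halt
    intro y
    have hkey : F y = F (-(x + ((n+1:ℕ):ℝ))) :=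
      is_const_of_deriv_eq_zero hdiff (fun z => (hderiv z).deriv) _ _
    rw [hy0] at hkey
    rw [hF] at hkey
    simp only [] at hkey
    linarith [hkey]

lemma abel_final (n : ℕ) (x : ℝ) :
    ∑ m ∈ range (n+1), (n.choose m : ℝ) * (if m = 0 then 1 else x * (x+((m:ℕ):ℝ))^(m-1)) *
      ((n - m : ℕ):ℝ)^(n-m) = (x + ((n:ℕ):ℝ))^n := by
  have ha := abel_aux n x 0
  rw [Finset.sum_range_succ']
  have hc : ∀ j ∈ range n, (n.choose (j+1) : ℝ) *
      (if j+1 = 0 then 1 else x * (x+((j+1:ℕ):ℝ))^(j+1-1)) * ((n - (j+1) : ℕ):ℝ)^(n-(j+1))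
      = x * ((n.choose (j+1):ℝ) * (x+1+(j:ℝ))^j * ((0:ℝ) + ((n-1-j:ℕ):ℝ))^(n-1-j)) := by
    intro j hj
    simp only [if_neg (Nat.succ_ne_zero j), Nat.add_sub_cancel]
    rw [show n-(j+1) = n-1-j from by omega,
      show x+((j+1:ℕ):ℝ) = x+1+(j:ℝ) from by push_cast; ring]
    ring
  rw [Finset.sum_congr rfl hc, ← Finset.mul_sum, ← ha]
  simp only [if_pos rfl, if_true, Nat.sub_zero, Nat.choose_zero_right, Nat.cast_one, zero_add]
  norm_num
section Path
variable {Ω : Type*} [MeasurableSpace Ω] {P : Measure Ω} {N : ℝ → Ω → ℕ}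
  (hN : IsStdPoissonProcess P N) {b x : ℝ} (hb : 1 < b) (hx : 0 < x)

lemma hT_nonneg (hb : 1 < b) (hx : 0 < x) (k : ℕ) : (0:ℝ) ≤ (x + k)/b := by positivity
lemma hT_mono (hb : 1 < b) (hx : 0 < x) {j k : ℕ} (h : j ≤ k) : (x + (j:ℝ))/b ≤ (x + k)/b := by
  have hb0 : (0:ℝ) < b := lt_trans one_pos hb
  gcongr

include hN hb hx in
lemma hit_lemma (ω : Ω) : ∀ k : ℕ, N ((x + k)/b) ω ≤ k → ∃ j, j ≤ k ∧ N ((x + j)/b) ω = j := by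
  have hb0 : (0:ℝ) < b := lt_trans one_pos hb
  intro k
  induction k with
  | zero => intro h; exact ⟨0, le_refl 0, Nat.le_zero.mp h⟩
  | succ k ih =>
    intro h
    by_cases hc : N ((x + (k+1 : ℕ))/b) ω = k+1
    · exact ⟨k+1, le_rfl, hc⟩
    · have h2 : N ((x + k)/b) ω ≤ N ((x + (k+1:ℕ))/b) ω := by
        apply hN.mono ω (Set.mem_Ici.mpr (hT_nonneg hb hx k))
          (Set.mem_Ici.mpr (hT_nonneg hb hx (k+1)))
        exact hT_mono hb hx (Nat.le_succ k)
      obtain ⟨j, hj, hje⟩ := ih (by omega)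
      exact ⟨j, by omega, hje⟩

include hN hb hx in
lemma nu_event_eq (ω : Ω) (n : ℕ) :
    (b * nu N b x ω - x = n) ↔
      (N ((x + n)/b) ω = n ∧ ∀ j < n, N ((x + j)/b) ω ≠ j) := by
  have hb0 : (0:ℝ) < b := lt_trans one_pos hb
  set A := {t : ℝ | 0 < t ∧ x < b * t - N t ω} with hA
  have hbdd : BddBelow A := ⟨0, fun t ht => ht.1.le⟩
  have hemptyA : (∀ j < n, N ((x + j)/b) ω ≠ j) → ∀ t ∈ A, (x + (n:ℝ))/b < t := by
    intro hne t ht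
    by_contra hle
    push_neg at hle
    obtain ⟨ht0, htA⟩ := ht
    have hk1 : (N t ω : ℝ) < b * t - x := by linarith
    have hbtx : b * t - x ≤ n := by
      have := (le_div_iff₀ hb0).mp hle
      linarith
    have hkn : (N t ω : ℝ) < n := lt_of_lt_of_le hk1 hbtx
    have hkn' : N t ω < n := by exact_mod_cast hkn
    have hTk : (x + (N t ω : ℝ))/b ≤ t := by
      rw [div_le_iff₀ hb0]; nlinarith
    have hmono : N ((x + (N t ω : ℕ))/b) ω ≤ N t ω :=
      hN.mono ω (Set.mem_Ici.mpr (hT_nonneg hb hx _)) (Set.mem_Ici.mpr ht0.le) hTk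
    obtain ⟨j, hjk, hje⟩ := hit_lemma hN hb hx ω (N t ω) hmono
    exact hne j (lt_of_le_of_lt hjk hkn') hje
  constructor
  · intro h
    have hAne : A.Nonempty := by
      by_contra hAe
      rw [Set.not_nonempty_iff_eq_empty] at hAe
      have h0 : nu N b x ω = 0 := by rw [nu, ← hA, hAe, Real.sInf_empty]
      rw [h0] at h
      have : (0:ℝ) ≤ n := Nat.cast_nonneg n
      nlinarith
    have hnu : nu N b x ω = (x + n)/b := by
      rw [eq_div_iff hb0.ne']; linarith
    have hsinf : sInf A = (x + n)/b := by rw [← hnu]; rfl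
    have hne : ∀ j < n, N ((x + j)/b) ω ≠ j := by
      intro j hj hSj
      obtain ⟨ε, hε, hεp⟩ := hN.rightCont ω ((x + j)/b) (hT_nonneg hb hx j)
      have hTjn : (x + (j:ℝ))/b < (x + n)/b := by
        gcongr
      set s := min ((x + j)/b + ε/2) (((x + j)/b + (x + n)/b)/2) with hs
      have hs1 : (x + j)/b < s := lt_min (by linarith) (by linarith)
      have hs2 : s < (x + j)/b + ε := lt_of_le_of_lt (min_le_left _ _) (by linarith)
      have hs3 : s < (x + n)/b := lt_of_le_of_lt (min_le_right _ _) (by linarith)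
      have hNs : N s ω = j := by rw [hεp s ⟨hs1.le, hs2⟩, hSj]
      have hsA : s ∈ A := by
        refine ⟨lt_of_le_of_lt (hT_nonneg hb hx j) hs1, ?_⟩
        rw [hNs]
        have : x + (j:ℝ) < b * s := by rw [← div_lt_iff₀' hb0]; exact hs1
        linarith
      have := csInf_le hbdd hsA
      rw [hsinf] at this
      linarith
    refine ⟨?_, hne⟩
    obtain ⟨ε, hε, hεp⟩ := hN.rightCont ω ((x + n)/b) (hT_nonneg hb hx n)
    have hSn_le : N ((x + n)/b) ω ≤ n := by
      by_contra hgt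
      push_neg at hgt
      have hδ : (0:ℝ) < min ε (1/b) := lt_min hε (by positivity)
      obtain ⟨t, htA, htlt⟩ := exists_lt_of_csInf_lt hAne
        (show sInf A < sInf A + min ε (1/b) by linarith)
      have htge : (x + n)/b ≤ t := by
        have h5 := csInf_le hbdd htA; rw [hsinf] at h5; exact h5
      have htub : t < (x + n)/b + ε := by
        rw [hsinf] at htlt
        have : min ε (1/b) ≤ ε := min_le_left _ _
        linarith
      have hNt : N t ω = N ((x + n)/b) ω := hεp t ⟨htge, htub⟩
      have hlt2 : (N t ω : ℝ) < b * t - x := by linarith [htA.2]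
      rw [hNt] at hlt2
      have hub : b * t < x + n + 1 := by
        have ht2 : t < (x + n)/b + 1/b := by
          rw [hsinf] at htlt
          have : min ε (1/b) ≤ 1/b := min_le_right _ _
          linarith
        have := mul_lt_mul_of_pos_left ht2 hb0
        rw [mul_add, mul_div_cancel₀ _ hb0.ne', mul_div_cancel₀ _ hb0.ne'] at this
        linarith
      have hcast : (n:ℝ) + 1 ≤ N ((x + n)/b) ω := by exact_mod_cast hgt
      linarith
    obtain ⟨j, hjn, hje⟩ := hit_lemma hN hb hx ω n hSn_le
    rcases lt_or_eq_of_le hjn with hlt | heq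
    · exact absurd hje (hne j hlt)
    · rwa [heq] at hje
  · rintro ⟨hSn, hne⟩
    obtain ⟨ε, hε, hεp⟩ := hN.rightCont ω ((x + n)/b) (hT_nonneg hb hx n)
    have hmem : ∀ s, (x + n)/b < s → s < (x + n)/b + ε → s ∈ A := by
      intro s h1 h2
      refine ⟨lt_of_le_of_lt (hT_nonneg hb hx n) h1, ?_⟩
      rw [hεp s ⟨h1.le, h2⟩, hSn]
      have : x + (n:ℝ) < b * s := by rw [← div_lt_iff₀' hb0]; exact h1
      linarith
    have hAne : A.Nonempty := ⟨(x + n)/b + ε/2, hmem _ (by linarith) (by linarith)⟩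
    have h1 : (x + n)/b ≤ sInf A := le_csInf hAne (fun t ht => (hemptyA hne t ht).le)
    have h2 : sInf A ≤ (x + n)/b := by
      by_contra hlt
      push_neg at hlt
      set δ := min (sInf A - (x + n)/b) ε with hδdef
      have hδ : 0 < δ := lt_min (by linarith) hε
      have hin : (x + n)/b + δ/2 ∈ A := hmem _ (by linarith)
        (by
          have : δ ≤ ε := min_le_right _ _
          linarith)
      have := csInf_le hbdd hin
      have hδ2 : δ ≤ sInf A - (x + n)/b := min_le_left _ _
      linarith
    have : nu N b x ω = (x + n)/b := le_antisymm h2 h1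
    rw [this]
    field_simp
    ring

def Ev {Ω : Type*} (N : ℝ → Ω → ℕ) (b x : ℝ) (m : ℕ) : Set Ω :=
  {ω | N ((x + m)/b) ω = m ∧ ∀ j < m, N ((x + j)/b) ω ≠ j}

noncomputable def gfun (b x : ℝ) (m : ℕ) : ℝ :=
  Real.exp (-((x + m)/b)) * (if m = 0 then 1 else x * (x + (m:ℝ))^(m-1)) / (m.factorial * b^m)

noncomputable def pifun (b : ℝ) (d : ℕ) : ℝ :=
  Real.exp (-((d:ℝ)/b)) * ((d:ℝ)/b)^d / d.factorial

include hN in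
lemma measEv (m : ℕ) : MeasurableSet (Ev N b x m) := by
  have : Ev N b x m = (N ((x + m)/b) ⁻¹' {m}) ∩
      ⋂ (j : ℕ) (_ : j < m), (N ((x + j)/b) ⁻¹' {j})ᶜ := by
    ext ω
    simp [Ev, Set.mem_iInter]
  rw [this]
  exact ((hN.meas _) (measurableSet_singleton m)).inter
    (MeasurableSet.iInter fun j => MeasurableSet.iInter fun _ =>
      ((hN.meas _) (measurableSet_singleton j)).compl)

include hN hb hx in
lemma indep_step (m n : ℕ) (hmn : m ≤ n) :
    P (Ev N b x m ∩ {ω | N ((x + n)/b) ω - N ((x + m)/b) ω = n - m})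
      = P (Ev N b x m) * P {ω | N ((x + n)/b) ω - N ((x + m)/b) ω = n - m} := by
  have hb0 : (0:ℝ) < b := lt_trans one_pos hb
  set t : ℕ → ℝ := fun j => if j = 0 then 0 else (x + ((min (j-1) n : ℕ)):ℝ)/b with ht_def
  have ht00 : t 0 = 0 := by simp [ht_def]
  have htj : ∀ j, j ≤ n → t (j+1) = (x + (j:ℕ))/b := by
    intro j hj
    simp only [ht_def, if_neg (Nat.succ_ne_zero j), Nat.add_sub_cancel, Nat.min_eq_left hj]
  have ht0 : ∀ j, 0 ≤ t j := by
    intro j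
    rcases Nat.eq_zero_or_pos j with rfl | hj
    · rw [ht00]
    · rw [ht_def]; simp only [if_neg (by omega : j ≠ 0)]; exact hT_nonneg hb hx _
  have htmono : Monotone t := by
    intro j j' hjj
    rcases Nat.eq_zero_or_pos j with rfl | hj
    · rw [ht00]; exact ht0 j'
    · have hj'0 : j' ≠ 0 := by omega
      simp only [ht_def, if_neg (by omega : j ≠ 0), if_neg hj'0]
      exact hT_mono hb hx (by omega : min (j-1) n ≤ min (j'-1) n)
  have hZmeas : ∀ i : Fin (n+1), Measurable (fun ω => N (t ((i:ℕ)+1)) ω - N (t (i:ℕ)) ω) :=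
    fun i => (hN.meas _).sub (hN.meas _)
  have hmonoT : ∀ ω, ∀ p q : ℕ, p ≤ q → N ((x + (p:ℕ))/b) ω ≤ N ((x + (q:ℕ))/b) ω := by
    intro ω p q hpq
    exact hN.mono ω (Set.mem_Ici.mpr (hT_nonneg hb hx p)) (Set.mem_Ici.mpr (hT_nonneg hb hx q))
      (hT_mono hb hx hpq)
  have hpartial : ∀ ω, ∀ j, j ≤ n →
      (∑ i ∈ Finset.range (j+1), (N (t (i+1)) ω - N (t i) ω)) = N ((x + (j:ℕ))/b) ω := by
    intro ω j
    induction j with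
    | zero =>
      intro _
      rw [Finset.sum_range_one, ht00, htj 0 (Nat.zero_le n), hN.init ω, Nat.sub_zero]
    | succ j ih =>
      intro hj
      rw [Finset.sum_range_succ, ih (by omega), htj j (by omega), htj (j+1) hj]
      have h1 := hmonoT ω j (j+1) (by omega)
      omega
  have hDsum : ∀ ω, ∀ q, m ≤ q → q ≤ n →
      (∑ i ∈ Finset.Ico (m+1) (q+1), (N (t (i+1)) ω - N (t i) ω))
        = N ((x + (q:ℕ))/b) ω - N ((x + (m:ℕ))/b) ω := by
    intro ω q hq hqn
    induction q, hq using Nat.le_induction with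
    | base => simp
    | succ q hq ih =>
      rw [Finset.sum_Ico_succ_top (by omega), ih (by omega), htj q (by omega), htj (q+1) hqn]
      have h1 := hmonoT ω m q hq
      have h2 := hmonoT ω q (q+1) (by omega)
      omega
  have hInd := hN.indepIncr (n+1) t htmono ht0
  set S : Finset (Fin (n+1)) := Finset.univ.filter (fun i => (i:ℕ) ≤ m) with hS_def
  set Tf : Finset (Fin (n+1)) := Finset.univ.filter (fun i => m < (i:ℕ)) with hTf_def
  have hdisj : Disjoint S Tf := by
    rw [Finset.disjoint_left]
    intro i hi hi'
    rw [hS_def, Finset.mem_filter] at hi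
    rw [hTf_def, Finset.mem_filter] at hi'
    omega
  have hIF := hInd.indepFun_finset S Tf hdisj hZmeas
  -- the S-side map
  set gmap : ((i : ↥S) → ℕ) → (ℕ → ℕ) := fun v j =>
    if h : j ≤ m ∧ j ≤ n then v ⟨(⟨j, by omega⟩ : Fin (n+1)), by
      rw [hS_def, Finset.mem_filter]; exact ⟨Finset.mem_univ _, h.1⟩⟩ else 0 with hgmap_def
  have hgmeas : Measurable gmap := by
    apply measurable_pi_lambda
    intro j
    by_cases h : j ≤ m ∧ j ≤ n
    · simp only [hgmap_def, dif_pos h]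
      exact measurable_pi_apply _
    · simp only [hgmap_def, dif_neg h]
      exact measurable_const
  set B : Set (ℕ → ℕ) := {u | (∑ i ∈ Finset.range (m+1), u i = m) ∧
      ∀ j < m, (∑ i ∈ Finset.range (j+1), u i) ≠ j} with hB_def
  have hsum_meas : ∀ k : ℕ, Measurable (fun u : ℕ → ℕ => ∑ i ∈ Finset.range (k+1), u i) :=
    fun k => Finset.measurable_sum _ (fun i _ => measurable_pi_apply i)
  have hB : MeasurableSet B := by
    have : B = ((fun u : ℕ → ℕ => ∑ i ∈ Finset.range (m+1), u i) ⁻¹' {m}) ∩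
        ⋂ (j : ℕ) (_ : j < m), ((fun u : ℕ → ℕ => ∑ i ∈ Finset.range (j+1), u i) ⁻¹' {j})ᶜ := by
      ext u; simp [hB_def, Set.mem_iInter]
    rw [this]
    exact ((hsum_meas m) (measurableSet_singleton _)).inter
      (MeasurableSet.iInter fun j => MeasurableSet.iInter fun _ =>
        ((hsum_meas j) (measurableSet_singleton _)).compl)
  -- key sum computation for the S side
  have hgZ : ∀ ω, ∀ j, j ≤ m → j ≤ n →
      (∑ i ∈ Finset.range (j+1),
        gmap (fun i : ↥S => N (t (((i:Fin (n+1)):ℕ)+1)) ω - N (t ((i:Fin (n+1)):ℕ)) ω) i)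
        = N ((x + (j:ℕ))/b) ω := by
    intro ω j hjm hjn
    rw [← hpartial ω j hjn]
    refine Finset.sum_congr rfl fun i hi => ?_
    have hi' : i ≤ m ∧ i ≤ n := by
      have := Finset.mem_range.mp hi; omega
    simp only [hgmap_def, dif_pos hi']
  have hSpre : Ev N b x m =
      (fun a (i : ↥S) => N (t (((i:Fin (n+1)):ℕ)+1)) a - N (t ((i:Fin (n+1)):ℕ)) a) ⁻¹'
        (gmap ⁻¹' B) := by
    ext ω
    simp only [Set.mem_preimage, hB_def, Set.mem_setOf_eq, Ev]
    constructor
    · rintro ⟨h1, h2⟩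
      exact ⟨by rw [hgZ ω m le_rfl hmn]; exact h1,
        fun j hj => by rw [hgZ ω j (by omega) (by omega)]; exact h2 j hj⟩
    · rintro ⟨h1, h2⟩
      rw [hgZ ω m le_rfl hmn] at h1
      refine ⟨h1, fun j hj => ?_⟩
      have := h2 j hj
      rwa [hgZ ω j (by omega) (by omega)] at this
  -- the T side
  set hmap : ((i : ↥Tf) → ℕ) → ℕ := fun w => ∑ i : ↥Tf, w i with hhmap_def
  have hhmeas : Measurable hmap :=
    Finset.measurable_sum _ (fun i _ => measurable_pi_apply i)
  have himg : Tf.image Fin.val = Finset.Ico (m+1) (n+1) := by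
    ext j
    simp only [Finset.mem_image, hTf_def, Finset.mem_filter, Finset.mem_univ, true_and,
      Finset.mem_Ico]
    constructor
    · rintro ⟨i, hi, rfl⟩; exact ⟨by omega, i.isLt⟩
    · rintro ⟨h1, h2⟩; exact ⟨⟨j, h2⟩, by simpa using (by omega : m < j), rfl⟩
  have hTZ : ∀ ω, hmap (fun i : ↥Tf => N (t (((i:Fin (n+1)):ℕ)+1)) ω - N (t ((i:Fin (n+1)):ℕ)) ω)
      = N ((x + (n:ℕ))/b) ω - N ((x + (m:ℕ))/b) ω := by
    intro ω
    have e1 : hmap (fun i : ↥Tf => N (t (((i:Fin (n+1)):ℕ)+1)) ω - N (t ((i:Fin (n+1)):ℕ)) ω)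
        = ∑ i ∈ Tf, (N (t ((i:ℕ)+1)) ω - N (t (i:ℕ)) ω) := by
      rw [hhmap_def]
      exact Finset.sum_coe_sort Tf (fun k : Fin (n+1) => N (t ((k:ℕ)+1)) ω - N (t (k:ℕ)) ω)
    have e2 : (∑ i ∈ Tf, (N (t ((i:ℕ)+1)) ω - N (t (i:ℕ)) ω))
        = ∑ j ∈ Finset.Ico (m+1) (n+1), (N (t (j+1)) ω - N (t j) ω) := by
      rw [← himg, Finset.sum_image (fun i _ i' _ h => Fin.val_injective h)]
    rw [e1, e2, hDsum ω n hmn le_rfl]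
  have hTpre : {ω | N ((x + n)/b) ω - N ((x + m)/b) ω = n - m} =
      (fun a (i : ↥Tf) => N (t (((i:Fin (n+1)):ℕ)+1)) a - N (t ((i:Fin (n+1)):ℕ)) a) ⁻¹'
        (hmap ⁻¹' {n - m}) := by
    ext ω
    simp only [Set.mem_preimage, Set.mem_setOf_eq, Set.mem_singleton_iff, hTZ ω]
  rw [hSpre, hTpre]
  exact hIF.measure_inter_preimage_eq_mul _ _ (hgmeas hB) (hhmeas (measurableSet_singleton _))

include hN hb hx in
lemma partition_eq (n : ℕ) :
    {ω | N ((x + n)/b) ω = n} =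
      ⋃ m ∈ Finset.range (n+1),
        (Ev N b x m ∩ {ω | N ((x + n)/b) ω - N ((x + m)/b) ω = n - m}) := by
  have hmonoT : ∀ ω, ∀ p q : ℕ, p ≤ q → N ((x + (p:ℕ))/b) ω ≤ N ((x + (q:ℕ))/b) ω := by
    intro ω p q hpq
    exact hN.mono ω (Set.mem_Ici.mpr (hT_nonneg hb hx p)) (Set.mem_Ici.mpr (hT_nonneg hb hx q))
      (hT_mono hb hx hpq)
  ext ω
  simp only [Set.mem_setOf_eq, Set.mem_iUnion, Finset.mem_range]
  constructor
  · intro hn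
    have hex : ∃ j : ℕ, N ((x + j)/b) ω = j := ⟨n, hn⟩
    set m := Nat.find hex with hm_def
    have hmn : m ≤ n := Nat.find_min' hex hn
    refine ⟨m, by omega, ⟨Nat.find_spec hex, fun j hj => Nat.find_min hex hj⟩, ?_⟩
    show N ((x + (n:ℕ))/b) ω - N ((x + (m:ℕ))/b) ω = n - m
    rw [hn, Nat.find_spec hex]
  · rintro ⟨m, hm, ⟨h1, _⟩, h3⟩
    have h3' : N ((x + (m:ℕ))/b) ω = m := h1
    have h3'' : N ((x + (n:ℕ))/b) ω - N ((x + (m:ℕ))/b) ω = n - m := h3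
    have h4 := hmonoT ω m n (by omega)
    omega

include hN hb hx in
lemma recursion_eq (n : ℕ) :
    ENNReal.ofReal (Real.exp (-((x + n)/b)) * ((x + n)/b)^n / n.factorial)
      = ∑ m ∈ Finset.range (n+1), P (Ev N b x m) * ENNReal.ofReal (pifun b (n - m)) := by
  have hb0 : (0:ℝ) < b := lt_trans one_pos hb
  have hDmeas : ∀ m : ℕ, MeasurableSet {ω | N ((x + n)/b) ω - N ((x + m)/b) ω = n - m} :=
    fun m => ((hN.meas _).sub (hN.meas _)) (measurableSet_singleton _)
  have htotal : P {ω | N ((x + n)/b) ω = n}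
      = ENNReal.ofReal (Real.exp (-((x + n)/b)) * ((x + n)/b)^n / n.factorial) := by
    have h := hN.poissonIncr 0 ((x + n)/b) le_rfl (hT_nonneg hb hx n) n
    rw [show {ω | N ((x + n)/b) ω - N 0 ω = n} = {ω | N ((x + n)/b) ω = n} from by
      ext ω; simp [hN.init ω], sub_zero] at h
    exact h
  have hpois : ∀ m, m ≤ n → P {ω | N ((x + n)/b) ω - N ((x + m)/b) ω = n - m}
      = ENNReal.ofReal (pifun b (n - m)) := by
    intro m hm
    have h := hN.poissonIncr ((x + m)/b) ((x + n)/b) (hT_nonneg hb hx m)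
      (hT_mono hb hx hm) (n - m)
    rw [show (x + (n:ℝ))/b - (x + (m:ℝ))/b = (((n - m : ℕ)):ℝ)/b from by
      rw [Nat.cast_sub hm]; ring] at h
    rw [h, pifun]
  rw [← htotal, partition_eq hN hb hx n, measure_biUnion_finset ?disj ?meas]
  · refine Finset.sum_congr rfl fun m hm => ?_
    have hm' : m ≤ n := by have := Finset.mem_range.mp hm; omega
    rw [indep_step hN hb hx m n hm', hpois m hm']
  case disj =>
    intro a ha b' hb' hab
    have ha' : a ≤ n := by simp only [Finset.coe_sort_coe, Finset.mem_coe, Finset.mem_range] at ha; omega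
    rw [Function.onFun]
    rw [Set.disjoint_left]
    rintro ω ⟨⟨ha1, ha2⟩, _⟩ ⟨⟨hb1, hb2⟩, _⟩
    rcases lt_or_gt_of_ne hab with h | h
    · exact (hb2 a h) ha1
    · exact (ha2 b' h) hb1
  case meas =>
    intro m hm
    exact (measEv hN m).inter (hDmeas m)
end Path

lemma gfun_nonneg {b x : ℝ} (hb0 : 0 < b) (hx : 0 ≤ x) (m : ℕ) : 0 ≤ gfun b x m := by
  rw [gfun]
  apply div_nonneg _ (by positivity)
  apply mul_nonneg (Real.exp_nonneg _)
  split_ifs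
  · exact zero_le_one
  · exact mul_nonneg hx (pow_nonneg (add_nonneg hx (Nat.cast_nonneg m)) _)

lemma pifun_nonneg {b : ℝ} (hb0 : 0 < b) (d : ℕ) : 0 ≤ pifun b d := by
  rw [pifun]; positivity

lemma key_real (b x : ℝ) (hb0 : 0 < b) (n : ℕ) :
    Real.exp (-((x + (n:ℕ))/b)) * ((x + (n:ℕ))/b)^n / (n.factorial : ℝ)
      = ∑ m ∈ Finset.range (n+1), gfun b x m * pifun b (n - m) := by
  have hbne : b ≠ 0 := hb0.ne'
  have hterm : ∀ m ∈ Finset.range (n+1), gfun b x m * pifun b (n - m)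
      = (Real.exp (-((x + (n:ℕ))/b)) / ((n.factorial : ℝ) * b^n)) *
        ((n.choose m : ℝ) * (if m = 0 then 1 else x * (x + ((m:ℕ):ℝ))^(m-1)) *
          (((n - m : ℕ)):ℝ)^(n-m)) := by
    intro m hm
    have hm' : m ≤ n := by have := Finset.mem_range.mp hm; omega
    obtain ⟨k, rfl⟩ : ∃ k, n = m + k := ⟨n - m, by omega⟩
    rw [gfun, pifun, Nat.cast_choose ℝ (Nat.le_add_right m k)]
    simp only [show m + k - m = k from by omega]
    have hexp : Real.exp (-((x + ((m:ℕ):ℝ))/b)) * Real.exp (-(((k:ℕ):ℝ)/b))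
        = Real.exp (-((x + (((m+k:ℕ)):ℝ))/b)) := by
      rw [← Real.exp_add]; congr 1; push_cast; ring
    rw [← hexp]
    have hf1 : (m.factorial : ℝ) ≠ 0 := Nat.cast_ne_zero.mpr (Nat.factorial_ne_zero m)
    have hf2 : (k.factorial : ℝ) ≠ 0 := Nat.cast_ne_zero.mpr (Nat.factorial_ne_zero k)
    have hf3 : (((m+k).factorial) : ℝ) ≠ 0 := Nat.cast_ne_zero.mpr (Nat.factorial_ne_zero _)
    field_simp
    ring
    rw [inv_pow]; field_simp
  rw [Finset.sum_congr rfl hterm, ← Finset.mul_sum, abel_final n x, div_pow]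
  ring

section Prob
variable {Ω : Type*} [MeasurableSpace Ω] {P : Measure Ω} {N : ℝ → Ω → ℕ}
  (hN : IsStdPoissonProcess P N) {b x : ℝ} (hb : 1 < b) (hx : 0 < x)

include hN hb hx in
lemma prob_E : ∀ n : ℕ, P (Ev N b x n) = ENNReal.ofReal (gfun b x n) := by
  intro n
  induction n using Nat.strong_induction_on with
  | _ n IH =>
  have hb0 : (0:ℝ) < b := lt_trans one_pos hb
  have hrec := recursion_eq hN hb hx n
  have hpi0 : pifun b 0 = 1 := by simp [pifun]
  rw [Finset.sum_range_succ, Nat.sub_self, hpi0, ENNReal.ofReal_one, mul_one] at hrec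
  have hIH : ∀ m ∈ Finset.range n, P (Ev N b x m) * ENNReal.ofReal (pifun b (n-m))
      = ENNReal.ofReal (gfun b x m * pifun b (n-m)) := by
    intro m hm
    rw [IH m (Finset.mem_range.mp hm), ← ENNReal.ofReal_mul (gfun_nonneg hb0 hx.le m)]
  rw [Finset.sum_congr rfl hIH] at hrec
  have hkey := key_real b x hb0 n
  rw [Finset.sum_range_succ, Nat.sub_self, hpi0, mul_one] at hkey
  have hsum_nonneg : ∀ m ∈ Finset.range n, 0 ≤ gfun b x m * pifun b (n-m) :=
    fun m _ => mul_nonneg (gfun_nonneg hb0 hx.le m) (pifun_nonneg hb0 _)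
  have heq2 : ENNReal.ofReal (Real.exp (-((x + (n:ℕ))/b)) * ((x + (n:ℕ))/b)^n / (n.factorial : ℝ))
      = (∑ m ∈ Finset.range n, ENNReal.ofReal (gfun b x m * pifun b (n-m)))
        + ENNReal.ofReal (gfun b x n) := by
    rw [hkey, ENNReal.ofReal_add (Finset.sum_nonneg hsum_nonneg) (gfun_nonneg hb0 hx.le n),
      ENNReal.ofReal_sum_of_nonneg hsum_nonneg]
  rw [heq2] at hrec
  have hfin : (∑ m ∈ Finset.range n, ENNReal.ofReal (gfun b x m * pifun b (n-m))) ≠ ⊤ :=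
    (ENNReal.sum_lt_top.mpr fun m _ => ENNReal.ofReal_lt_top).ne
  exact ((ENNReal.add_right_inj hfin).mp hrec).symm
end Prob


/-- For a standard Poisson process `N`, `b > 1`, `x > 0` and
`ν(x) = inf{t > 0 : bt − N(t) > x}`, one has for every integer `n ≥ 0`:
`P(bν(x) − x = n) = (1/n!) e^{-(x+n)/b} x (x+n)^{n-1} b^{-n}`. -/
theorem passage_time_distribution {Ω : Type*} [MeasurableSpace Ω] (P : Measure Ω)
    (N : ℝ → Ω → ℕ) (hN : IsStdPoissonProcess P N)
    (b x : ℝ) (hb : 1 < b) (hx : 0 < x) (n : ℕ) :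
    P {ω | b * nu N b x ω - x = n} =
      ENNReal.ofReal
        ((1 / n.factorial) * Real.exp (-(x + n) / b) * x * (x + n) ^ ((n:ℝ) - 1) * b ^ (-(n:ℝ))) := by
  have hb0 : (0:ℝ) < b := lt_trans one_pos hb
  have hset : {ω | b * nu N b x ω - x = n} = Ev N b x n := by
    ext ω
    simpa [Ev] using nu_event_eq hN hb hx ω n
  rw [hset, prob_E hN hb hx n]
  congr 1
  rw [gfun, neg_div]
  rcases Nat.eq_zero_or_pos n with rfl | hn
  · simp only [Nat.cast_zero, add_zero, if_pos rfl, Nat.factorial_zero, Nat.cast_one, pow_zero,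
      mul_one, one_mul, neg_zero, Real.rpow_zero]
    simp only [if_true, div_one]
    rw [show (0:ℝ) - 1 = -1 from by norm_num, Real.rpow_neg_one]
    field_simp [hx.ne']
  · rw [if_neg (by omega)]
    rw [show ((n:ℝ) - 1) = (((n-1 : ℕ)):ℝ) from by rw [Nat.cast_sub hn]; norm_num,
      Real.rpow_natCast, Real.rpow_neg hb0.le, Real.rpow_natCast]
    have hf : (n.factorial : ℝ) ≠ 0 := Nat.cast_ne_zero.mpr (Nat.factorial_ne_zero n)
    field_simp
end

section
/- Let θ < 1, ρ > 0. If e^{(θ−1)t}Y_θ(t) → W_θ in probability with W_θ > 0 a.s. (which holds when θ ≤ 0), and T(n) = inf{t : Y_θ(t) = n}, then T(n) − T(⌊Un⌋) converges in probability as n → ∞ to −(1−θ)^{-1} ln U, for U an independent uniform random variable on (0,1); in particular, the limit is exponentially distributed with parameter 1 − θ. -/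
open MeasureTheory ProbabilityTheory Filter

/-- The first time the counting process `Y` reaches level `n`. -/
noncomputable def hitTime {Ω : Type*} (Y : ℝ → Ω → ℕ) (n : ℕ) (ω : Ω) : ℝ :=
  sInf {t : ℝ | 0 ≤ t ∧ Y t ω = n}

section Pointwise

variable {Ω : Type*} (Y : ℝ → Ω → ℕ) (ω : Ω)

lemma hitTime_nonneg (n : ℕ) : 0 ≤ hitTime Y n ω :=
  Real.sInf_nonneg fun _ hx => hx.1

lemma hitTime_mem
    (rightCont : ∀ t ≥ (0:ℝ), ∃ ε > 0, ∀ s ∈ Set.Ico t (t + ε), Y s ω = Y t ω)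
    {n : ℕ} (hne : {t : ℝ | 0 ≤ t ∧ Y t ω = n}.Nonempty) :
    Y (hitTime Y n ω) ω = n := by
  have hbdd : BddBelow {t : ℝ | 0 ≤ t ∧ Y t ω = n} := ⟨0, fun x hx => hx.1⟩
  have ha0 : 0 ≤ hitTime Y n ω := hitTime_nonneg Y ω n
  obtain ⟨ε, hε, hec⟩ := rightCont _ ha0
  obtain ⟨s, hsS, hs⟩ := Real.lt_sInf_add_pos hne hε
  have h1 : hitTime Y n ω ≤ s := csInf_le hbdd hsS
  have h2 := hec s ⟨h1, hs⟩
  rw [← h2]; exact hsS.2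

lemma hitTime_le_iff
    (mono : MonotoneOn (fun t => Y t ω) (Set.Ici 0))
    (rightCont : ∀ t ≥ (0:ℝ), ∃ ε > 0, ∀ s ∈ Set.Ico t (t + ε), Y s ω = Y t ω)
    (unitJumps : ∀ t ≥ (0:ℝ), ∀ k : ℕ, 1 ≤ k → k ≤ Y t ω → ∃ s ∈ Set.Icc 0 t, Y s ω = k)
    {n : ℕ} (hn : 1 ≤ n) (hbig : ∃ s, 0 ≤ s ∧ n ≤ Y s ω)
    {t : ℝ} (ht : 0 ≤ t) :
    hitTime Y n ω ≤ t ↔ n ≤ Y t ω := by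
  constructor
  · intro h
    obtain ⟨s, hs0, hsn⟩ := hbig
    obtain ⟨s', hs', hys'⟩ := unitJumps s hs0 n hn hsn
    have hne : {u : ℝ | 0 ≤ u ∧ Y u ω = n}.Nonempty := ⟨s', hs'.1, hys'⟩
    have hmem := hitTime_mem Y ω rightCont hne
    calc n = Y (hitTime Y n ω) ω := hmem.symm
    _ ≤ Y t ω := mono (Set.mem_Ici.mpr (hitTime_nonneg Y ω n)) (Set.mem_Ici.mpr ht) h
  · intro h
    obtain ⟨s, hs, hys⟩ := unitJumps t ht n hn h
    exact (csInf_le ⟨0, fun x hx => hx.1⟩ (show s ∈ {u : ℝ | 0 ≤ u ∧ Y u ω = n} from ⟨hs.1, hys⟩)).trans hs.2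

lemma hitTime_mono
    (rightCont : ∀ t ≥ (0:ℝ), ∃ ε > 0, ∀ s ∈ Set.Ico t (t + ε), Y s ω = Y t ω)
    (unitJumps : ∀ t ≥ (0:ℝ), ∀ k : ℕ, 1 ≤ k → k ≤ Y t ω → ∃ s ∈ Set.Icc 0 t, Y s ω = k)
    {m n : ℕ} (hm : 1 ≤ m) (hmn : m ≤ n) (hbig : ∃ s, 0 ≤ s ∧ n ≤ Y s ω) :
    hitTime Y m ω ≤ hitTime Y n ω := by
  obtain ⟨s, hs0, hsn⟩ := hbig
  obtain ⟨s', hs', hys'⟩ := unitJumps s hs0 n (hm.trans hmn) hsn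
  have hne : {u : ℝ | 0 ≤ u ∧ Y u ω = n}.Nonempty := ⟨s', hs'.1, hys'⟩
  have ha0 : 0 ≤ hitTime Y n ω := hitTime_nonneg Y ω n
  have hmem := hitTime_mem Y ω rightCont hne
  have hYm : m ≤ Y (hitTime Y n ω) ω := by rw [hmem]; exact hmn
  obtain ⟨s'', hs'', hys''⟩ := unitJumps _ ha0 m hm hYm
  exact (csInf_le ⟨0, fun x hx => hx.1⟩ (show s'' ∈ {u : ℝ | 0 ≤ u ∧ Y u ω = m} from ⟨hs''.1, hys''⟩)).trans hs''.2

end Pointwise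

section Helpers

lemma exists_ofReal_le {η : ENNReal} (h : 0 < η) :
    ∃ r : ℝ, 0 < r ∧ ENNReal.ofReal r ≤ η := by
  rcases eq_or_ne η ⊤ with rfl | hne
  · exact ⟨1, one_pos, le_top⟩
  · exact ⟨η.toReal, ENNReal.toReal_pos h.ne' hne,
      le_of_eq (ENNReal.ofReal_toReal hne)⟩

lemma measure_eq_of_inter_eq {Ω : Type*} [MeasurableSpace Ω] {P : Measure Ω}
    {s t g : Set Ω} (hg : P gᶜ = 0) (h : s ∩ g = t ∩ g) : P s = P t := by
  have key : ∀ u v : Set Ω, u ∩ g = v ∩ g → P u ≤ P v := by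
    intro u v huv
    calc P u = P ((u ∩ g) ∪ (u ∩ gᶜ)) := by rw [Set.inter_union_compl]
    _ ≤ P (u ∩ g) + P (u ∩ gᶜ) := measure_union_le _ _
    _ = P (u ∩ g) := by
        rw [measure_mono_null Set.inter_subset_right hg, add_zero]
    _ = P (v ∩ g) := by rw [huv]
    _ ≤ P v := measure_mono Set.inter_subset_left
  exact le_antisymm (key s t h) (key t s h.symm)

end Helpers
section NullSets

variable {Ω : Type*} [MeasurableSpace Ω] (P : Measure Ω) [IsProbabilityMeasure P]

lemma W_nonpos_null (W : Ω → ℝ) (measW : Measurable W)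
    (hWpos : P {ω | 0 < W ω} = 1) : P {ω | ¬ 0 < W ω} = 0 := by
  have hms : MeasurableSet {ω | 0 < W ω} := measW measurableSet_Ioi
  have : {ω | ¬ 0 < W ω} = {ω | 0 < W ω}ᶜ := rfl
  rw [this, prob_compl_eq_one_sub hms, hWpos, tsub_self]

lemma unbounded_null (θ : ℝ) (hθ : θ < 1) (Y : ℝ → Ω → ℕ) (W : Ω → ℝ)
    (measW : Measurable W)
    (hWpos : P {ω | 0 < W ω} = 1)
    (hconv : ∀ δ > (0:ℝ),
      Tendsto (fun t : ℝ => P {ω | δ ≤ |Real.exp ((θ - 1) * t) * Y t ω - W ω|})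
        atTop (nhds 0)) :
    P {ω | ¬ ∀ n : ℕ, ∃ s, 0 ≤ s ∧ n ≤ Y s ω} = 0 := by
  set A : ℕ → ℕ → Set Ω := fun m k =>
    {ω | (1:ℝ)/(m+1) ≤ |Real.exp ((θ - 1) * (k:ℝ)) * Y (k:ℝ) ω - W ω|} with hA
  have htail : ∀ m N : ℕ, P (⋂ k ∈ {k : ℕ | N ≤ k}, A m k) = 0 := by
    intro m N
    have hδ : (0:ℝ) < 1/(m+1) := by positivity
    have h1 : Tendsto (fun k : ℕ => P (A m k)) atTop (nhds 0) :=
      (hconv _ hδ).comp tendsto_natCast_atTop_atTop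
    refine le_antisymm ?_ zero_le
    refine ge_of_tendsto h1 ?_
    filter_upwards [eventually_ge_atTop N] with k hk
    exact measure_mono (Set.biInter_subset_of_mem hk)
  have hsub : {ω | ¬ ∀ n : ℕ, ∃ s, 0 ≤ s ∧ n ≤ Y s ω} ⊆
      {ω | ¬ 0 < W ω} ∪ ⋃ (m : ℕ) (N : ℕ), ⋂ k ∈ {k : ℕ | N ≤ k}, A m k := by
    intro ω hω
    by_cases hW : 0 < W ω
    · right
      push_neg at hω
      obtain ⟨n, hn⟩ := hω
      -- Y s ω < n for all s ≥ 0
      have hYb : ∀ s : ℝ, 0 ≤ s → (Y s ω : ℝ) ≤ n := by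
        intro s hs
        exact_mod_cast (hn s hs).le
      obtain ⟨m, hm⟩ := exists_nat_one_div_lt (by positivity : (0:ℝ) < W ω / 2)
      have hδ : (0:ℝ) < 1/(m+1) := by positivity
      -- choose N with exp((θ-1)k)*n < 1/(m+1) for k ≥ N
      have hexp : Tendsto (fun k : ℕ => Real.exp ((θ - 1) * (k:ℝ)) * n) atTop (nhds 0) := by
        have h1 : Tendsto (fun k : ℕ => (θ - 1) * (k:ℝ)) atTop atBot := by
          apply Tendsto.const_mul_atTop_of_neg (by linarith : θ - 1 < 0)
            tendsto_natCast_atTop_atTop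
        have := (Real.tendsto_exp_atBot.comp h1).mul_const (n:ℝ)
        simpa using this
      obtain ⟨N, hN⟩ := (hexp.eventually_lt_const hδ).exists_forall_of_atTop
      refine Set.mem_iUnion.mpr ⟨m, Set.mem_iUnion.mpr ⟨N, ?_⟩⟩
      refine Set.mem_biInter ?_
      intro k hk
      have hk' : N ≤ k := hk
      have hb : Real.exp ((θ - 1) * (k:ℝ)) * Y (k:ℝ) ω ≤ Real.exp ((θ - 1) * (k:ℝ)) * n := by
        have := hYb (k:ℝ) (Nat.cast_nonneg k)
        exact mul_le_mul_of_nonneg_left this (Real.exp_pos _).le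
      have hb2 : Real.exp ((θ - 1) * (k:ℝ)) * Y (k:ℝ) ω < 1/(m+1) := lt_of_le_of_lt hb (hN k hk')
      have hYnn : 0 ≤ Real.exp ((θ - 1) * (k:ℝ)) * Y (k:ℝ) ω := by positivity
      have hW2 : 2 * ((1:ℝ)/(m+1)) < W ω := by linarith
      show (1:ℝ)/(m+1) ≤ |Real.exp ((θ - 1) * (k:ℝ)) * Y (k:ℝ) ω - W ω|
      rw [abs_sub_comm]
      have : (1:ℝ)/(m+1) ≤ W ω - Real.exp ((θ - 1) * (k:ℝ)) * Y (k:ℝ) ω := by linarith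
      exact this.trans (le_abs_self _)
    · exact Or.inl hW
  refine le_antisymm ?_ zero_le
  calc P {ω | ¬ ∀ n : ℕ, ∃ s, 0 ≤ s ∧ n ≤ Y s ω}
      ≤ P ({ω | ¬ 0 < W ω} ∪ ⋃ (m : ℕ) (N : ℕ), ⋂ k ∈ {k : ℕ | N ≤ k}, A m k) :=
        measure_mono hsub
    _ ≤ P {ω | ¬ 0 < W ω} + P (⋃ (m : ℕ) (N : ℕ), ⋂ k ∈ {k : ℕ | N ≤ k}, A m k) :=
        measure_union_le _ _
    _ = 0 := by
        rw [W_nonpos_null P W measW hWpos,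
          measure_iUnion_null fun m => measure_iUnion_null fun N => htail m N, add_zero]

end NullSets
section LemmaA

variable {Ω : Type*} [MeasurableSpace Ω] (P : Measure Ω) [IsProbabilityMeasure P]

lemma lemmaA (θ : ℝ) (hθ : θ < 1) (Y : ℝ → Ω → ℕ) (W : Ω → ℝ)
    (measW : Measurable W)
    (mono : ∀ ω, MonotoneOn (fun t => Y t ω) (Set.Ici 0))
    (rightCont : ∀ ω, ∀ t ≥ (0:ℝ), ∃ ε > 0, ∀ s ∈ Set.Ico t (t + ε), Y s ω = Y t ω)
    (unitJumps : ∀ ω, ∀ t ≥ (0:ℝ), ∀ k : ℕ, 1 ≤ k → k ≤ Y t ω →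
      ∃ s ∈ Set.Icc 0 t, Y s ω = k)
    (hWpos : P {ω | 0 < W ω} = 1)
    (hconv : ∀ δ > (0:ℝ),
      Tendsto (fun t : ℝ => P {ω | δ ≤ |Real.exp ((θ - 1) * t) * Y t ω - W ω|})
        atTop (nhds 0))
    (ε : ℝ) (hε : 0 < ε) :
    Tendsto (fun n : ℕ =>
        P {ω | ε ≤ |(1 - θ) * hitTime Y n ω - Real.log n + Real.log (W ω)|})
      atTop (nhds 0) := by
  classical
  have hβ : (0:ℝ) < 1 - θ := by linarith
  rw [ENNReal.tendsto_nhds_zero]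
  intro ηE hηE
  obtain ⟨r, hr0, hrη⟩ := exists_ofReal_le hηE
  -- choose w₀
  have hW0null : P {ω | ¬ 0 < W ω} = 0 := W_nonpos_null P W measW hWpos
  obtain ⟨m₀, hm₀⟩ : ∃ m₀ : ℕ, P {ω | W ω < 1/(m₀+1)} < ENNReal.ofReal (r/4) := by
    have hmeas : ∀ m : ℕ, NullMeasurableSet {ω | W ω < 1/(m+1:ℝ)} P :=
      fun m => (measW measurableSet_Iio).nullMeasurableSet
    have hanti : Antitone (fun m : ℕ => {ω | W ω < 1/(m+1:ℝ)}) := by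
      intro a b hab ω hω
      simp only [Set.mem_setOf_eq] at hω ⊢
      refine lt_of_lt_of_le hω ?_
      apply one_div_le_one_div_of_le (by positivity)
      have : (a:ℝ) ≤ b := Nat.cast_le.mpr hab
      linarith
    have htend := tendsto_measure_iInter_atTop hmeas hanti ⟨0, measure_ne_top _ _⟩
    have hint : P (⋂ m : ℕ, {ω | W ω < 1/(m+1:ℝ)}) = 0 := by
      refine le_antisymm ?_ zero_le
      refine le_trans (measure_mono ?_) (le_of_eq hW0null)
      intro ω hω
      simp only [Set.mem_iInter, Set.mem_setOf_eq] at hω ⊢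
      intro hpos
      obtain ⟨m, hm⟩ := exists_nat_one_div_lt hpos
      exact absurd (hω m) (not_lt.mpr hm.le)
    rw [hint] at htend
    have := htend.eventually_lt_const (ENNReal.ofReal_pos.mpr (by positivity) : (0:ENNReal) < ENNReal.ofReal (r/4))
    exact this.exists
  set w₀ : ℝ := 1/(m₀+1) with hw₀def
  have hw₀ : 0 < w₀ := by positivity
  -- choose w₁
  obtain ⟨m₁, hm₁⟩ : ∃ m₁ : ℕ, P {ω | (m₁:ℝ) < W ω} < ENNReal.ofReal (r/4) := by
    have hmeas : ∀ m : ℕ, NullMeasurableSet {ω | (m:ℝ) < W ω} P :=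
      fun m => (measW measurableSet_Ioi).nullMeasurableSet
    have hanti : Antitone (fun m : ℕ => {ω | (m:ℝ) < W ω}) := by
      intro a b hab ω hω
      simp only [Set.mem_setOf_eq] at hω ⊢
      exact lt_of_le_of_lt (Nat.cast_le.mpr hab) hω
    have htend := tendsto_measure_iInter_atTop hmeas hanti ⟨0, measure_ne_top _ _⟩
    have hint : P (⋂ m : ℕ, {ω | (m:ℝ) < W ω}) = 0 := by
      have : (⋂ m : ℕ, {ω | (m:ℝ) < W ω}) = ∅ := by
        ext ω
        simp only [Set.mem_iInter, Set.mem_setOf_eq, Set.mem_empty_iff_false, iff_false,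
          not_forall, not_lt]
        obtain ⟨m, hm⟩ := exists_nat_gt (W ω)
        exact ⟨m, hm.le⟩
      rw [this, measure_empty]
    rw [hint] at htend
    exact (htend.eventually_lt_const
      (ENNReal.ofReal_pos.mpr (by positivity) : (0:ENNReal) < ENNReal.ofReal (r/4))).exists
  set w₁ : ℝ := max (m₁:ℝ) w₀ with hw₁def
  have hw₀w₁ : w₀ ≤ w₁ := le_max_right _ _
  have hm₁' : P {ω | w₁ < W ω} ≤ ENNReal.ofReal (r/4) := by
    refine le_trans (measure_mono ?_) hm₁.le
    intro ω hω
    exact lt_of_le_of_lt (le_max_left (m₁:ℝ) w₀) (by exact hω)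
  -- the grid
  set v : ℕ → ℝ := fun i => w₀ * Real.exp (i * (ε/4)) with hvdef
  have hv0 : v 0 = w₀ := by simp [hvdef]
  have hvpos : ∀ i, 0 < v i := fun i => by positivity
  have hvmono : Monotone v := by
    intro a b hab
    apply mul_le_mul_of_nonneg_left _ hw₀.le
    apply Real.exp_le_exp.mpr
    apply mul_le_mul_of_nonneg_right (Nat.cast_le.mpr hab) (by positivity)
  have hvsucc : ∀ i : ℕ, v (i+1) = v i * Real.exp (ε/4) := by
    intro i
    simp only [hvdef]
    rw [mul_assoc, ← Real.exp_add]
    congr 2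
    push_cast
    ring
  have hw₀v : ∀ i, w₀ ≤ v i := fun i => hv0 ▸ hvmono (Nat.zero_le i)
  -- choose K
  obtain ⟨K, hK⟩ : ∃ K : ℕ, w₁ < v K := by
    have h1 : Tendsto (fun K : ℕ => (K:ℝ) * (ε/4)) atTop atTop :=
      Tendsto.atTop_mul_const (by positivity) tendsto_natCast_atTop_atTop
    have h2 : Tendsto v atTop atTop :=
      (Real.tendsto_exp_atTop.comp h1).const_mul_atTop hw₀
    exact (h2.eventually_gt_atTop w₁).exists
  -- the bad-event times and sets
  set sp : ℕ → ℕ → ℝ := fun n i =>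
    (1-θ)⁻¹ * (Real.log n + (ε/2 - Real.log (v (i+1)))) with hspdef
  set sm : ℕ → ℕ → ℝ := fun n i =>
    (1-θ)⁻¹ * (Real.log n + (-(ε/2) - Real.log (v i))) with hsmdef
  set δp : ℝ := w₀ * (1 - Real.exp (-(ε/4))) with hδpdef
  set δm : ℝ := w₀ * (Real.exp (ε/2) - Real.exp (ε/4)) with hδmdef
  have hδp : 0 < δp := by
    apply mul_pos hw₀
    have : Real.exp (-(ε/4)) < 1 := Real.exp_lt_one_iff.mpr (by linarith)
    linarith
  have hδm : 0 < δm := by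
    apply mul_pos hw₀
    have : Real.exp (ε/4) < Real.exp (ε/2) := Real.exp_lt_exp.mpr (by linarith)
    linarith
  set Bp : ℕ → ℕ → Set Ω := fun n i =>
    {ω | δp ≤ |Real.exp ((θ - 1) * sp n i) * Y (sp n i) ω - W ω|} with hBpdef
  set Bm : ℕ → ℕ → Set Ω := fun n i =>
    {ω | δm ≤ |Real.exp ((θ - 1) * sm n i) * Y (sm n i) ω - W ω|} with hBmdef
  have hlogTend : Tendsto (fun n : ℕ => Real.log n) atTop atTop :=
    Real.tendsto_log_atTop.comp tendsto_natCast_atTop_atTop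
  have hBp0 : ∀ i, Tendsto (fun n => P (Bp n i)) atTop (nhds 0) := by
    intro i
    have hsp : Tendsto (fun n : ℕ => sp n i) atTop atTop := by
      apply Tendsto.const_mul_atTop (by positivity)
      exact tendsto_atTop_add_const_right _ _ hlogTend
    exact (hconv δp hδp).comp hsp
  have hBm0 : ∀ i, Tendsto (fun n => P (Bm n i)) atTop (nhds 0) := by
    intro i
    have hsm : Tendsto (fun n : ℕ => sm n i) atTop atTop := by
      apply Tendsto.const_mul_atTop (by positivity)
      exact tendsto_atTop_add_const_right _ _ hlogTend
    exact (hconv δm hδm).comp hsm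
  -- sum of bad probabilities tends to 0
  have hSum : Tendsto (fun n => ∑ i ∈ Finset.range K, (P (Bp n i) + P (Bm n i)))
      atTop (nhds 0) := by
    have := tendsto_finset_sum (Finset.range K)
      (fun i _ => ((hBp0 i).add (hBm0 i) : Tendsto (fun n => P (Bp n i) + P (Bm n i))
        atTop (nhds (0+0))))
    simpa using this
  have hSumEv : ∀ᶠ n in atTop,
      (∑ i ∈ Finset.range K, (P (Bp n i) + P (Bm n i))) ≤ ENNReal.ofReal (r/2) :=
    hSum.eventually_le_const (ENNReal.ofReal_pos.mpr (by positivity) : (0:ENNReal) < ENNReal.ofReal (r/2))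
  -- the exponent identity
  have hexpid : ∀ x : ℝ, Real.exp ((θ-1) * ((1-θ)⁻¹ * x)) = Real.exp (-x) := by
    intro x
    congr 1
    field_simp
    ring
  -- main eventual bound
  filter_upwards [eventually_ge_atTop 1,
    tendsto_natCast_atTop_atTop.eventually_ge_atTop (v K), hSumEv] with n hn1 hnK hsums
  have hn0 : (0:ℝ) < n := by exact_mod_cast hn1
  -- containment
  have hsub : {ω | ε ≤ |(1 - θ) * hitTime Y n ω - Real.log n + Real.log (W ω)|} ⊆
      ({ω | W ω < w₀} ∪ {ω | w₁ < W ω} ∪ ⋃ i ∈ Finset.range K, (Bp n i ∪ Bm n i)) ∪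
      {ω | ¬ ∀ n' : ℕ, ∃ s, 0 ≤ s ∧ n' ≤ Y s ω} := by
    intro ω hω
    by_contra hR
    simp only [Set.mem_union, Set.mem_iUnion, Finset.mem_range, not_or, not_exists,
      Set.mem_setOf_eq] at hR
    obtain ⟨⟨⟨hW0, hW1⟩, hB⟩, hUnb⟩ := hR
    rw [not_not] at hUnb
    rw [not_lt] at hW0 hW1
    -- find the slab index
    set i : ℕ := Nat.findGreatest (fun i => v i ≤ W ω) K with hidef
    have hPi : v i ≤ W ω := by
      have h := Nat.findGreatest_spec (P := fun j => v j ≤ W ω) (Nat.zero_le K)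
        (by show v 0 ≤ W ω; rw [hv0]; exact hW0)
      exact h
    have hPK : ¬ v K ≤ W ω := not_le.mpr (lt_of_le_of_lt hW1 hK)
    have hiK : i < K :=
      lt_of_le_of_ne (Nat.findGreatest_le K) (fun h => hPK (h ▸ hPi))
    have hWv1 : W ω ≤ v (i+1) := by
      by_contra h
      push_neg at h
      exact Nat.findGreatest_is_greatest (Nat.lt_succ_self i) hiK h.le
    have hWpos' : 0 < W ω := lt_of_lt_of_le hw₀ hW0
    obtain ⟨hBpω, hBmω⟩ := hB i hiK
    simp only [Set.mem_setOf_eq] at hω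
    -- upper bound
    have hvi1K : v (i+1) ≤ v K := hvmono hiK
    have hlogvi1 : Real.log (v (i+1)) ≤ Real.log n :=
      Real.log_le_log (hvpos _) (le_trans hvi1K hnK)
    have hsp0 : 0 ≤ sp n i := by
      apply mul_nonneg (inv_nonneg.mpr hβ.le)
      linarith
    have hEp : Real.exp ((θ-1) * sp n i) = v (i+1) * Real.exp (-(ε/2)) / n := by
      have h1 : sp n i = (1-θ)⁻¹ * (Real.log n + (ε/2 - Real.log (v (i+1)))) := rfl
      rw [h1, hexpid,
        show -(Real.log (n:ℝ) + (ε/2 - Real.log (v (i+1))))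
            = (Real.log (v (i+1)) + (-(ε/2))) - Real.log (n:ℝ) by ring,
        Real.exp_sub, Real.exp_add, Real.exp_log (hvpos _), Real.exp_log hn0]
    have hYsp : n ≤ Y (sp n i) ω := by
      by_contra h
      push_neg at h
      have hYr : (Y (sp n i) ω : ℝ) ≤ n := by exact_mod_cast h.le
      have hEpos : 0 < Real.exp ((θ-1) * sp n i) := Real.exp_pos _
      have h2 : Real.exp ((θ-1) * sp n i) * Y (sp n i) ω ≤ v (i+1) * Real.exp (-(ε/2)) := by
        calc Real.exp ((θ-1) * sp n i) * Y (sp n i) ω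
            ≤ Real.exp ((θ-1) * sp n i) * n := mul_le_mul_of_nonneg_left hYr hEpos.le
        _ = v (i+1) * Real.exp (-(ε/2)) := by rw [hEp]; field_simp
      have h3 : v (i+1) * Real.exp (-(ε/2)) = v i * Real.exp (-(ε/4)) := by
        rw [hvsucc i, mul_assoc, ← Real.exp_add]
        congr 2
        ring
      have he1 : 0 ≤ 1 - Real.exp (-(ε/4)) := by
        have : Real.exp (-(ε/4)) ≤ 1 := Real.exp_le_one_iff.mpr (by linarith)
        linarith
      have h5 : δp ≤ v i * (1 - Real.exp (-(ε/4))) :=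
        mul_le_mul_of_nonneg_right (hw₀v i) he1
      have h6 : δp ≤ |Real.exp ((θ-1) * sp n i) * Y (sp n i) ω - W ω| := by
        rw [abs_sub_comm]
        refine le_trans ?_ (le_abs_self _)
        have h2' := h2.trans_eq h3
        have h7 : v i - v i * Real.exp (-(ε/4)) = v i * (1 - Real.exp (-(ε/4))) := by ring
        linarith
      exact hBpω h6
    have hTle : hitTime Y n ω ≤ sp n i :=
      (hitTime_le_iff Y ω (mono ω) (rightCont ω) (unitJumps ω) hn1 (hUnb n) hsp0).mpr hYsp
    have hWpos'' : (0:ℝ) < W ω := hWpos'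
    have hup : (1-θ) * hitTime Y n ω ≤ Real.log n - Real.log (W ω) + ε/2 := by
      have h1 : (1-θ) * hitTime Y n ω ≤ (1-θ) * sp n i :=
        mul_le_mul_of_nonneg_left hTle hβ.le
      have h2 : (1-θ) * sp n i = Real.log n + (ε/2 - Real.log (v (i+1))) := by
        show (1-θ) * ((1-θ)⁻¹ * _) = _
        rw [← mul_assoc, mul_inv_cancel₀ hβ.ne', one_mul]
      have h3 : Real.log (W ω) ≤ Real.log (v (i+1)) := Real.log_le_log hWpos' hWv1
      linarith
    -- lower bound
    have hEm : Real.exp ((θ-1) * sm n i) = v i * Real.exp (ε/2) / n := by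
      have h1 : sm n i = (1-θ)⁻¹ * (Real.log n + (-(ε/2) - Real.log (v i))) := rfl
      rw [h1, hexpid,
        show -(Real.log (n:ℝ) + (-(ε/2) - Real.log (v i)))
            = (Real.log (v i) + ε/2) - Real.log (n:ℝ) by ring,
        Real.exp_sub, Real.exp_add, Real.exp_log (hvpos _), Real.exp_log hn0]
    have hYsm : Y (sm n i) ω < n := by
      by_contra h
      push_neg at h
      have hYr : (n:ℝ) ≤ Y (sm n i) ω := by exact_mod_cast h
      have hEpos : 0 < Real.exp ((θ-1) * sm n i) := Real.exp_pos _
      have h2 : v i * Real.exp (ε/2) ≤ Real.exp ((θ-1) * sm n i) * Y (sm n i) ω := by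
        calc v i * Real.exp (ε/2) = Real.exp ((θ-1) * sm n i) * n := by rw [hEm]; field_simp
        _ ≤ _ := mul_le_mul_of_nonneg_left hYr hEpos.le
      have h3 : Real.exp (ε/4) ≤ Real.exp (ε/2) := Real.exp_le_exp.mpr (by linarith)
      have h5 : δm ≤ v i * (Real.exp (ε/2) - Real.exp (ε/4)) :=
        mul_le_mul_of_nonneg_right (hw₀v i) (by linarith)
      have h7 : W ω ≤ v i * Real.exp (ε/4) := hWv1.trans (le_of_eq (hvsucc i))
      have h6 : δm ≤ |Real.exp ((θ-1) * sm n i) * Y (sm n i) ω - W ω| := by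
        refine le_trans ?_ (le_abs_self _)
        have h8 : v i * (Real.exp (ε/2) - Real.exp (ε/4))
            = v i * Real.exp (ε/2) - v i * Real.exp (ε/4) := by ring
        linarith
      exact hBmω h6
    have hsmT : sm n i < hitTime Y n ω := by
      by_contra h
      push_neg at h
      have hsm0 : 0 ≤ sm n i := le_trans (hitTime_nonneg Y ω n) h
      have := (hitTime_le_iff Y ω (mono ω) (rightCont ω) (unitJumps ω) hn1 (hUnb n) hsm0).mp h
      exact absurd this (not_le.mpr hYsm)
    have hlow : Real.log n - Real.log (W ω) - ε/2 ≤ (1-θ) * hitTime Y n ω := by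
      have h1 : (1-θ) * sm n i ≤ (1-θ) * hitTime Y n ω :=
        mul_le_mul_of_nonneg_left hsmT.le hβ.le
      have h2 : (1-θ) * sm n i = Real.log n + (-(ε/2) - Real.log (v i)) := by
        show (1-θ) * ((1-θ)⁻¹ * _) = _
        rw [← mul_assoc, mul_inv_cancel₀ hβ.ne', one_mul]
      have h3 : Real.log (v i) ≤ Real.log (W ω) := Real.log_le_log (hvpos i) hPi
      linarith
    have habs : |(1 - θ) * hitTime Y n ω - Real.log n + Real.log (W ω)| ≤ ε/2 :=
      abs_le.mpr ⟨by linarith, by linarith⟩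
    linarith [le_trans hω habs]
  calc P {ω | ε ≤ |(1 - θ) * hitTime Y n ω - Real.log n + Real.log (W ω)|}
      ≤ P (({ω | W ω < w₀} ∪ {ω | w₁ < W ω} ∪ ⋃ i ∈ Finset.range K, (Bp n i ∪ Bm n i)) ∪
        {ω | ¬ ∀ n' : ℕ, ∃ s, 0 ≤ s ∧ n' ≤ Y s ω}) := measure_mono hsub
    _ ≤ P ({ω | W ω < w₀} ∪ {ω | w₁ < W ω} ∪ ⋃ i ∈ Finset.range K, (Bp n i ∪ Bm n i)) +
        P {ω | ¬ ∀ n' : ℕ, ∃ s, 0 ≤ s ∧ n' ≤ Y s ω} := measure_union_le _ _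
    _ = P ({ω | W ω < w₀} ∪ {ω | w₁ < W ω} ∪ ⋃ i ∈ Finset.range K, (Bp n i ∪ Bm n i)) := by
        rw [unbounded_null P θ hθ Y W measW hWpos hconv, add_zero]
    _ ≤ P ({ω | W ω < w₀} ∪ {ω | w₁ < W ω}) +
        P (⋃ i ∈ Finset.range K, (Bp n i ∪ Bm n i)) := measure_union_le _ _
    _ ≤ (P {ω | W ω < w₀} + P {ω | w₁ < W ω}) +
        P (⋃ i ∈ Finset.range K, (Bp n i ∪ Bm n i)) :=
        add_le_add (measure_union_le _ _) le_rfl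
    _ ≤ (P {ω | W ω < w₀} + P {ω | w₁ < W ω}) +
        ∑ i ∈ Finset.range K, P (Bp n i ∪ Bm n i) :=
        add_le_add le_rfl (measure_biUnion_finset_le _ _)
    _ ≤ (P {ω | W ω < w₀} + P {ω | w₁ < W ω}) +
        ∑ i ∈ Finset.range K, (P (Bp n i) + P (Bm n i)) := by
        gcongr with i hi
        exact measure_union_le _ _
    _ ≤ (ENNReal.ofReal (r/4) + ENNReal.ofReal (r/4)) + ENNReal.ofReal (r/2) :=
        add_le_add (add_le_add hm₀.le hm₁') hsums
    _ = ENNReal.ofReal r := by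
        rw [← ENNReal.ofReal_add (by positivity) (by positivity),
          ← ENNReal.ofReal_add (by positivity) (by positivity),
          show r/4 + r/4 + r/2 = r by ring]
    _ ≤ ηE := hrη


end LemmaA
section LemmaA'

variable {Ω : Type*} [MeasurableSpace Ω] (P : Measure Ω) [IsProbabilityMeasure P]

lemma lemmaA' (θ : ℝ) (hθ : θ < 1) (Y : ℝ → Ω → ℕ) (W : Ω → ℝ)
    (measW : Measurable W)
    (mono : ∀ ω, MonotoneOn (fun t => Y t ω) (Set.Ici 0))
    (rightCont : ∀ ω, ∀ t ≥ (0:ℝ), ∃ ε > 0, ∀ s ∈ Set.Ico t (t + ε), Y s ω = Y t ω)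
    (unitJumps : ∀ ω, ∀ t ≥ (0:ℝ), ∀ k : ℕ, 1 ≤ k → k ≤ Y t ω →
      ∃ s ∈ Set.Icc 0 t, Y s ω = k)
    (hWpos : P {ω | 0 < W ω} = 1)
    (hconv : ∀ δ > (0:ℝ),
      Tendsto (fun t : ℝ => P {ω | δ ≤ |Real.exp ((θ - 1) * t) * Y t ω - W ω|})
        atTop (nhds 0))
    (u ε : ℝ) (hu0 : 0 < u) (hε : 0 < ε) :
    Tendsto (fun n : ℕ =>
        P {ω | ε ≤ |(1 - θ) * hitTime Y ⌊u * (n:ℝ)⌋₊ ω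
          - Real.log n - Real.log u + Real.log (W ω)|})
      atTop (nhds 0) := by
  have hun : Tendsto (fun n : ℕ => u * (n:ℝ)) atTop atTop :=
    Tendsto.const_mul_atTop hu0 tendsto_natCast_atTop_atTop
  have hm : Tendsto (fun n : ℕ => ⌊u * (n:ℝ)⌋₊) atTop atTop :=
    tendsto_nat_floor_atTop.comp hun
  have hA := (lemmaA P θ hθ Y W measW mono rightCont unitJumps hWpos hconv (ε/2)
    (by linarith)).comp hm
  -- deterministic control of the logs
  have h1e : (0:ℝ) < 1 - Real.exp (-(ε/2)) := by
    have : Real.exp (-(ε/2)) < 1 := Real.exp_lt_one_iff.mpr (by linarith)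
    linarith
  have hdet : ∀ᶠ n : ℕ in atTop,
      |Real.log (⌊u * (n:ℝ)⌋₊ : ℝ) - Real.log n - Real.log u| ≤ ε/2 := by
    filter_upwards [hun.eventually_ge_atTop (max 2 (1/(1 - Real.exp (-(ε/2))))),
      eventually_ge_atTop 1] with n hn hn1
    set x := u * (n:ℝ) with hx
    have hx2 : (2:ℝ) ≤ x := le_trans (le_max_left _ _) hn
    have hxinv : 1/(1 - Real.exp (-(ε/2))) ≤ x := le_trans (le_max_right _ _) hn
    have hx0 : (0:ℝ) < x := by linarith
    have hfl_le : (⌊x⌋₊ : ℝ) ≤ x := Nat.floor_le hx0.le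
    have hfl_gt : x - 1 < (⌊x⌋₊ : ℝ) := Nat.sub_one_lt_floor x
    have hkey : x * Real.exp (-(ε/2)) ≤ x - 1 := by
      have h2 : 1 ≤ x * (1 - Real.exp (-(ε/2))) := by
        rw [div_le_iff₀ h1e] at hxinv
        nlinarith [hxinv]
      nlinarith
    have hfl_pos : (0:ℝ) < (⌊x⌋₊ : ℝ) := by linarith
    have hlow : Real.log x - ε/2 ≤ Real.log (⌊x⌋₊ : ℝ) := by
      have := Real.log_le_log (by positivity : (0:ℝ) < x * Real.exp (-(ε/2)))
        (hkey.trans hfl_gt.le)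
      rwa [Real.log_mul hx0.ne' (Real.exp_pos _).ne', Real.log_exp] at this
    have hhigh : Real.log (⌊x⌋₊ : ℝ) ≤ Real.log x := Real.log_le_log hfl_pos hfl_le
    have hn0 : (0:ℝ) < n := by exact_mod_cast hn1
    have hlogx : Real.log x = Real.log u + Real.log n := Real.log_mul hu0.ne' hn0.ne'
    rw [hlogx] at hlow hhigh
    exact abs_le.mpr ⟨by linarith, by linarith⟩
  refine tendsto_of_tendsto_of_tendsto_of_le_of_le' tendsto_const_nhds hA ?_ ?_
  · exact Eventually.of_forall fun n => zero_le
  · filter_upwards [hdet] with n hd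
    refine measure_mono ?_
    intro ω hω
    simp only [Set.mem_setOf_eq] at hω ⊢
    have htri := abs_sub_abs_le_abs_sub
      ((1 - θ) * hitTime Y ⌊u * (n:ℝ)⌋₊ ω - Real.log n - Real.log u + Real.log (W ω))
      ((1 - θ) * hitTime Y ⌊u * (n:ℝ)⌋₊ ω - Real.log (⌊u * (n:ℝ)⌋₊:ℝ) + Real.log (W ω))
    have heq : ((1 - θ) * hitTime Y ⌊u * (n:ℝ)⌋₊ ω - Real.log n - Real.log u + Real.log (W ω))
        - ((1 - θ) * hitTime Y ⌊u * (n:ℝ)⌋₊ ω - Real.log (⌊u * (n:ℝ)⌋₊:ℝ) + Real.log (W ω))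
        = Real.log (⌊u * (n:ℝ)⌋₊:ℝ) - Real.log n - Real.log u := by ring
    rw [heq] at htri
    have habs := abs_le.mp hd
    show ε/2 ≤ |(1 - θ) * hitTime Y ⌊u * (n:ℝ)⌋₊ ω - Real.log (⌊u * (n:ℝ)⌋₊:ℝ) + Real.log (W ω)|
    linarith [htri.trans hd]

end LemmaA'
section Uniform

variable {Ω : Type*} [MeasurableSpace Ω] (P : Measure Ω) [IsProbabilityMeasure P]

lemma U_lt_eq (U : Ω → ℝ) (measU : Measurable U)
    (hUlaw : ∀ t ∈ Set.Icc (0:ℝ) 1, P {ω | U ω ≤ t} = ENNReal.ofReal t)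
    (a : ℝ) (ha0 : 0 < a) (ha1 : a ≤ 1) :
    P {ω | U ω < a} = ENNReal.ofReal a := by
  apply le_antisymm
  · refine le_trans (measure_mono ?_) (le_of_eq (hUlaw a ⟨ha0.le, ha1⟩))
    intro ω h
    exact le_of_lt (show U ω < a from h)
  · have h1 : Tendsto (fun k : ℕ => a * (1 - 1/(k+1:ℝ))) atTop (nhds a) := by
      have h2 := tendsto_one_div_add_atTop_nhds_zero_nat (𝕜 := ℝ)
      have h3 := (tendsto_const_nhds (x := a) (f := atTop (α := ℕ))).mul
        ((tendsto_const_nhds (x := (1:ℝ)) (f := atTop (α := ℕ))).sub h2)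
      simpa using h3
    have hseq : Tendsto (fun k : ℕ => ENNReal.ofReal (a * (1 - 1/(k+1:ℝ)))) atTop
        (nhds (ENNReal.ofReal a)) := (ENNReal.continuous_ofReal.tendsto a).comp h1
    refine le_of_tendsto hseq (Eventually.of_forall fun k => ?_)
    have hk1 : (1:ℝ)/(k+1) ≤ 1 := by
      rw [div_le_one (by positivity)]
      linarith [Nat.cast_nonneg (α := ℝ) k]
    have hkpos : (0:ℝ) < 1/(k+1) := by positivity
    have hk0 : 0 ≤ a * (1 - 1/(k+1:ℝ)) := by nlinarith
    have hlt : a * (1 - 1/(k+1:ℝ)) < a := by nlinarith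
    calc ENNReal.ofReal (a * (1 - 1/(k+1:ℝ)))
        = P {ω | U ω ≤ a * (1 - 1/(k+1:ℝ))} :=
          (hUlaw _ ⟨hk0, by nlinarith⟩).symm
      _ ≤ P {ω | U ω < a} := measure_mono fun ω h => lt_of_le_of_lt h hlt

lemma U_ge_eq (U : Ω → ℝ) (measU : Measurable U)
    (hUlaw : ∀ t ∈ Set.Icc (0:ℝ) 1, P {ω | U ω ≤ t} = ENNReal.ofReal t)
    (a : ℝ) (ha0 : 0 < a) (ha1 : a ≤ 1) :
    P {ω | a ≤ U ω} = ENNReal.ofReal (1-a) := by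
  have h1 : {ω | a ≤ U ω} = {ω | U ω < a}ᶜ := by
    ext ω; simp [not_lt]
  rw [h1,
    prob_compl_eq_one_sub (show MeasurableSet {ω | U ω < a} from measU measurableSet_Iio),
    U_lt_eq P U measU hUlaw a ha0 ha1, ← ENNReal.ofReal_one,
    ← ENNReal.ofReal_sub 1 ha0.le]

lemma U_ge_one_null (U : Ω → ℝ) (measU : Measurable U)
    (hUlaw : ∀ t ∈ Set.Icc (0:ℝ) 1, P {ω | U ω ≤ t} = ENNReal.ofReal t) :
    P {ω | 1 ≤ U ω} = 0 := by
  refine le_antisymm ?_ zero_le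
  have hbound : ∀ k : ℕ, P {ω | 1 ≤ U ω} ≤ ENNReal.ofReal (1/(k+1:ℝ)) := by
    intro k
    have hk1 : (1:ℝ)/(k+1) ≤ 1 := by
      rw [div_le_one (by positivity)]
      linarith [Nat.cast_nonneg (α := ℝ) k]
    have hkpos : (0:ℝ) < 1/(k+1) := by positivity
    have hq : (0:ℝ) ≤ 1 - 1/(k+1) := by linarith
    calc P {ω | 1 ≤ U ω} ≤ P {ω | U ω ≤ 1 - 1/(k+1:ℝ)}ᶜ := by
          refine measure_mono fun ω h => ?_
          simp only [Set.mem_compl_iff, Set.mem_setOf_eq, not_le]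
          have : (1:ℝ) ≤ U ω := h
          linarith
      _ = 1 - P {ω | U ω ≤ 1 - 1/(k+1:ℝ)} := prob_compl_eq_one_sub (show MeasurableSet {ω | U ω ≤ 1 - 1/(k+1:ℝ)} from measU measurableSet_Iic)
      _ = 1 - ENNReal.ofReal (1 - 1/(k+1:ℝ)) := by rw [hUlaw _ ⟨hq, by linarith⟩]
      _ = ENNReal.ofReal (1/(k+1:ℝ)) := by
          rw [← ENNReal.ofReal_one, ← ENNReal.ofReal_sub 1 hq]
          congr 1
          ring
  have htend : Tendsto (fun k : ℕ => ENNReal.ofReal (1/(k+1:ℝ))) atTop (nhds 0) := by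
    have := (ENNReal.continuous_ofReal.tendsto 0).comp tendsto_one_div_add_atTop_nhds_zero_nat
    simpa [Function.comp_def] using this
  exact ge_of_tendsto htend (Eventually.of_forall hbound)

end Uniform
set_option maxHeartbeats 2000000 in
/-- Let `θ < 1` and let `Y = Y_θ` be a counting process started from one individual
(monotone, right-continuous, with unit jumps) such that
`e^{(θ−1)t} Y(t) → W` in probability with `W > 0` a.s. (as holds for the general
branching process `Y_θ` when `θ ≤ 0`). If `T(n) = inf{t : Y(t) = n}` and `U` is an
independent uniform variable on `(0,1)`, then `T(n) − T(⌊Un⌋)` converges in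
probability to `−(1−θ)⁻¹ ln U`, which is exponential with parameter `1−θ`. -/
theorem hit_time_gap_limit {Ω : Type*} [MeasurableSpace Ω] (P : Measure Ω)
    [IsProbabilityMeasure P] (θ : ℝ) (hθ : θ < 1)
    (Y : ℝ → Ω → ℕ) (W : Ω → ℝ) (U : Ω → ℝ)
    (measY : Measurable fun p : ℝ × Ω => Y p.1 p.2)
    (measW : Measurable W) (measU : Measurable U)
    (Y0 : ∀ ω, Y 0 ω = 1)
    (mono : ∀ ω, MonotoneOn (fun t => Y t ω) (Set.Ici 0))
    (rightCont : ∀ ω, ∀ t ≥ (0:ℝ), ∃ ε > 0, ∀ s ∈ Set.Ico t (t + ε), Y s ω = Y t ω)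
    (unitJumps : ∀ ω, ∀ t ≥ (0:ℝ), ∀ k : ℕ, 1 ≤ k → k ≤ Y t ω →
      ∃ s ∈ Set.Icc 0 t, Y s ω = k)
    (hWpos : P {ω | 0 < W ω} = 1)
    (hconv : ∀ δ > (0:ℝ),
      Tendsto (fun t : ℝ => P {ω | δ ≤ |Real.exp ((θ - 1) * t) * Y t ω - W ω|})
        atTop (nhds 0))
    (hUlaw : ∀ t ∈ Set.Icc (0:ℝ) 1, P {ω | U ω ≤ t} = ENNReal.ofReal t)
    (hUindep : IndepFun U (fun ω => ((fun t : ℝ => Y t ω), W ω)) P) :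
    (∀ δ > (0:ℝ),
      Tendsto (fun n : ℕ =>
          P {ω | δ ≤ |hitTime Y n ω - hitTime Y ⌊U ω * n⌋₊ ω
            - (-(1 - θ)⁻¹ * Real.log (U ω))|})
        atTop (nhds 0)) ∧
      (∀ t : ℝ, 0 ≤ t →
        P {ω | -(1 - θ)⁻¹ * Real.log (U ω) ≤ t}
          = ENNReal.ofReal (1 - Real.exp (-(1 - θ) * t))) := by
  classical
  have hβ : (0:ℝ) < 1 - θ := by linarith
  constructor
  · -- convergence in probability
    intro δ hδ
    rw [ENNReal.tendsto_nhds_zero]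
    intro ηE hηE
    obtain ⟨r, hr0, hrη⟩ := exists_ofReal_le hηE
    set ε : ℝ := δ/5 with hεdef
    have hε : 0 < ε := by positivity
    set γ : ℝ := (1-θ)*ε with hγdef
    have hγ : 0 < γ := by positivity
    -- choose M
    obtain ⟨M, hM⟩ : ∃ M : ℕ, Real.exp (-((M:ℝ)*γ)) ≤ r/2 := by
      have h1 : Tendsto (fun m : ℕ => (m:ℝ)*γ) atTop atTop :=
        Tendsto.atTop_mul_const hγ tendsto_natCast_atTop_atTop
      have h2 : Tendsto (fun m : ℕ => -((m:ℝ)*γ)) atTop atBot :=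
        tendsto_neg_atBot_iff.mpr h1
      have h3 := Real.tendsto_exp_atBot.comp h2
      exact (h3.eventually_le_const (by positivity : (0:ℝ) < r/2)).exists
    set u : ℕ → ℝ := fun j => Real.exp (-((j:ℝ)*γ)) with hudef
    have hupos : ∀ j, 0 < u j := fun j => Real.exp_pos _
    have huone : ∀ j, u j ≤ 1 := fun j => Real.exp_le_one_iff.mpr (neg_nonpos.mpr (by positivity))
    have hu0 : u 0 = 1 := by simp [hudef]
    have hlogu : ∀ j, Real.log (u j) = -((j:ℝ)*γ) := fun j => Real.log_exp _
    have huanti : ∀ {a b : ℕ}, a ≤ b → u b ≤ u a := by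
      intro a b hab
      apply Real.exp_le_exp.mpr
      have : (a:ℝ) ≤ b := Nat.cast_le.mpr hab
      nlinarith
    -- the bad events
    set D : ℕ → ℕ → Set Ω := fun j n =>
      {ω | (1-θ)*ε ≤ |(1-θ) * hitTime Y ⌊u j * (n:ℝ)⌋₊ ω
        - Real.log n - Real.log (u j) + Real.log (W ω)|} with hDdef
    have hD0 : ∀ j, Tendsto (fun n => P (D j n)) atTop (nhds 0) := fun j =>
      lemmaA' P θ hθ Y W measW mono rightCont unitJumps hWpos hconv (u j) ((1-θ)*ε)
        (hupos j) (by positivity)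
    have hSum : Tendsto (fun n => ∑ j ∈ Finset.range (M+1), P (D j n)) atTop (nhds 0) := by
      have := tendsto_finset_sum (Finset.range (M+1)) (fun j _ => hD0 j)
      simpa using this
    have hSumEv : ∀ᶠ n in atTop,
        (∑ j ∈ Finset.range (M+1), P (D j n)) ≤ ENNReal.ofReal (r/2) :=
      hSum.eventually_le_const
        (ENNReal.ofReal_pos.mpr (by positivity) : (0:ENNReal) < ENNReal.ofReal (r/2))
    have hnull : P ({ω | ¬ ∀ n' : ℕ, ∃ s, 0 ≤ s ∧ n' ≤ Y s ω} ∪ {ω | 1 ≤ U ω}) = 0 :=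
      measure_union_null (unbounded_null P θ hθ Y W measW hWpos hconv)
        (U_ge_one_null P U measU hUlaw)
    have hUMbound : P {ω | U ω < u M} ≤ ENNReal.ofReal (r/2) := by
      calc P {ω | U ω < u M} ≤ P {ω | U ω ≤ u M} := by
            refine measure_mono fun ω h => ?_
            exact le_of_lt (show U ω < u M from h)
        _ = ENNReal.ofReal (u M) := hUlaw _ ⟨(hupos M).le, huone M⟩
        _ ≤ ENNReal.ofReal (r/2) := ENNReal.ofReal_le_ofReal hM
    filter_upwards [eventually_ge_atTop 1,
      (Tendsto.const_mul_atTop (hupos M) tendsto_natCast_atTop_atTop).eventually_ge_atTop 1,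
      hSumEv] with n hn1 hnM hsums
    have hn0 : (0:ℝ) < n := by exact_mod_cast hn1
    -- containment
    have hsub : {ω | δ ≤ |hitTime Y n ω - hitTime Y ⌊U ω * n⌋₊ ω
          - (-(1 - θ)⁻¹ * Real.log (U ω))|} ⊆
        ({ω | U ω < u M} ∪ ⋃ j ∈ Finset.range (M+1), D j n) ∪
        ({ω | ¬ ∀ n' : ℕ, ∃ s, 0 ≤ s ∧ n' ≤ Y s ω} ∪ {ω | 1 ≤ U ω}) := by
      intro ω hω
      by_contra hR
      simp only [Set.mem_union, Set.mem_iUnion, Finset.mem_range, not_or, not_exists,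
        Set.mem_setOf_eq] at hR
      obtain ⟨⟨hUM, hDall⟩, hUnb', hU1⟩ := hR
      rw [not_not] at hUnb'
      rw [not_lt] at hUM
      rw [not_le] at hU1
      have hUpos : 0 < U ω := lt_of_lt_of_le (hupos M) hUM
      simp only [Set.mem_setOf_eq] at hω
      -- the slab index
      set j : ℕ := Nat.findGreatest (fun j => U ω < u j) M with hjdef
      have hPj : U ω < u j := by
        have h := Nat.findGreatest_spec (P := fun j => U ω < u j) (Nat.zero_le M)
          (by show U ω < u 0; rw [hu0]; exact hU1)
        exact h
      have hjM : j < M := lt_of_le_of_ne (Nat.findGreatest_le M)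
        (fun h => absurd (h ▸ hPj) (not_lt.mpr hUM))
      have hUj1 : u (j+1) ≤ U ω := by
        by_contra h
        push_neg at h
        exact Nat.findGreatest_is_greatest (Nat.lt_succ_self j) (Nat.succ_le_of_lt hjM) h
      -- floor comparisons
      have hnn : (0:ℝ) ≤ (n:ℝ) := Nat.cast_nonneg n
      have hmle : ⌊U ω * (n:ℝ)⌋₊ ≤ ⌊u j * (n:ℝ)⌋₊ :=
        Nat.floor_mono (mul_le_mul_of_nonneg_right hPj.le hnn)
      have hmge : ⌊u (j+1) * (n:ℝ)⌋₊ ≤ ⌊U ω * (n:ℝ)⌋₊ :=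
        Nat.floor_mono (mul_le_mul_of_nonneg_right hUj1 hnn)
      have h1m : 1 ≤ ⌊u (j+1) * (n:ℝ)⌋₊ := by
        apply Nat.le_floor
        have h2 : u M * n ≤ u (j+1) * n :=
          mul_le_mul_of_nonneg_right (huanti (Nat.succ_le_of_lt hjM)) hnn
        push_cast
        linarith [hnM, h2]
      -- hitTime monotonicity
      have hTmono1 : hitTime Y ⌊u (j+1) * (n:ℝ)⌋₊ ω ≤ hitTime Y ⌊U ω * (n:ℝ)⌋₊ ω :=
        hitTime_mono Y ω (rightCont ω) (unitJumps ω) h1m hmge (hUnb' _)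
      have hTmono2 : hitTime Y ⌊U ω * (n:ℝ)⌋₊ ω ≤ hitTime Y ⌊u j * (n:ℝ)⌋₊ ω :=
        hitTime_mono Y ω (rightCont ω) (unitJumps ω) (h1m.trans hmge) hmle (hUnb' _)
      -- event bounds
      have hDj : |(1-θ) * hitTime Y ⌊u j * (n:ℝ)⌋₊ ω
          - Real.log n - Real.log (u j) + Real.log (W ω)| < (1-θ)*ε :=
        not_le.mp (hDall j (by omega))
      have hDj1 : |(1-θ) * hitTime Y ⌊u (j+1) * (n:ℝ)⌋₊ ω
          - Real.log n - Real.log (u (j+1)) + Real.log (W ω)| < (1-θ)*ε :=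
        not_le.mp (hDall (j+1) (by omega))
      have hD00 : |(1-θ) * hitTime Y ⌊u 0 * (n:ℝ)⌋₊ ω
          - Real.log n - Real.log (u 0) + Real.log (W ω)| < (1-θ)*ε :=
        not_le.mp (hDall 0 (by omega))
      have h00 : ⌊u 0 * (n:ℝ)⌋₊ = n := by
        rw [hu0, one_mul, Nat.floor_natCast]
      rw [h00, hu0, Real.log_one] at hD00
      rw [hlogu j] at hDj
      rw [hlogu (j+1)] at hDj1
      -- log U bounds
      have hLU1 : Real.log (U ω) ≤ -((j:ℝ)*γ) := by
        rw [← hlogu j]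
        exact (Real.log_lt_log hUpos hPj).le
      have hLU2 : -(((j+1:ℕ):ℝ)*γ) ≤ Real.log (U ω) := by
        rw [← hlogu (j+1)]
        exact Real.log_le_log (hupos (j+1)) hUj1
      have hcast : ((j+1:ℕ):ℝ) = (j:ℝ) + 1 := by push_cast; ring
      rw [hcast] at hDj1 hLU2
      -- arithmetic
      obtain ⟨ha1, ha2⟩ := abs_lt.mp hDj
      obtain ⟨hb1, hb2⟩ := abs_lt.mp hDj1
      obtain ⟨hc1, hc2⟩ := abs_lt.mp hD00
      have hmul1 : (1-θ) * hitTime Y ⌊U ω * (n:ℝ)⌋₊ ω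
          ≤ (1-θ) * hitTime Y ⌊u j * (n:ℝ)⌋₊ ω :=
        mul_le_mul_of_nonneg_left hTmono2 hβ.le
      have hmul2 : (1-θ) * hitTime Y ⌊u (j+1) * (n:ℝ)⌋₊ ω
          ≤ (1-θ) * hitTime Y ⌊U ω * (n:ℝ)⌋₊ ω :=
        mul_le_mul_of_nonneg_left hTmono1 hβ.le
      set X : ℝ := hitTime Y n ω - hitTime Y ⌊U ω * (n:ℝ)⌋₊ ω
        - (-(1 - θ)⁻¹ * Real.log (U ω)) with hXdef
      have hXmul : (1-θ) * X = (1-θ) * hitTime Y n ω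
          - (1-θ) * hitTime Y ⌊U ω * (n:ℝ)⌋₊ ω + Real.log (U ω) := by
        rw [hXdef]
        field_simp
        ring
      have hXb : |(1-θ) * X| < 3*((1-θ)*ε) := by
        rw [abs_lt]
        constructor
        · rw [hXmul]
          have := hγdef
          linarith
        · rw [hXmul]
          have := hγdef
          linarith
      have hXb2 : |X| < 3*ε := by
        rw [abs_mul, abs_of_pos hβ] at hXb
        nlinarith
      have : δ ≤ |X| := hω
      rw [hεdef] at hXb2
      linarith
    -- measure bound
    calc P {ω | δ ≤ |hitTime Y n ω - hitTime Y ⌊U ω * n⌋₊ ω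
          - (-(1 - θ)⁻¹ * Real.log (U ω))|}
        ≤ P (({ω | U ω < u M} ∪ ⋃ j ∈ Finset.range (M+1), D j n) ∪
          ({ω | ¬ ∀ n' : ℕ, ∃ s, 0 ≤ s ∧ n' ≤ Y s ω} ∪ {ω | 1 ≤ U ω})) := measure_mono hsub
      _ ≤ P ({ω | U ω < u M} ∪ ⋃ j ∈ Finset.range (M+1), D j n) +
          P ({ω | ¬ ∀ n' : ℕ, ∃ s, 0 ≤ s ∧ n' ≤ Y s ω} ∪ {ω | 1 ≤ U ω}) :=
          measure_union_le _ _
      _ = P ({ω | U ω < u M} ∪ ⋃ j ∈ Finset.range (M+1), D j n) := by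
          rw [hnull, add_zero]
      _ ≤ P {ω | U ω < u M} + P (⋃ j ∈ Finset.range (M+1), D j n) := measure_union_le _ _
      _ ≤ P {ω | U ω < u M} + ∑ j ∈ Finset.range (M+1), P (D j n) :=
          add_le_add le_rfl (measure_biUnion_finset_le _ _)
      _ ≤ ENNReal.ofReal (r/2) + ENNReal.ofReal (r/2) := add_le_add hUMbound hsums
      _ = ENNReal.ofReal r := by
          rw [← ENNReal.ofReal_add (by positivity) (by positivity),
            show r/2 + r/2 = r by ring]
      _ ≤ ηE := hrη
  · -- the exponential law
    intro t ht
    set a : ℝ := Real.exp (-(1-θ)*t) with hadef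
    have ha0 : 0 < a := Real.exp_pos _
    have ha1 : a ≤ 1 := by
      rw [hadef]
      apply Real.exp_le_one_iff.mpr
      nlinarith [mul_nonneg hβ.le ht]
    set g : Set Ω := {ω | 0 < U ω ∧ U ω < 1} with hgdef
    have hgc : P gᶜ = 0 := by
      have hsub : gᶜ ⊆ {ω | U ω ≤ 0} ∪ {ω | 1 ≤ U ω} := by
        intro ω hω
        simp only [hgdef, Set.mem_compl_iff, Set.mem_setOf_eq, not_and, not_lt] at hω
        by_cases h : 0 < U ω
        · exact Or.inr (hω h)
        · exact Or.inl (not_lt.mp h)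
      refine measure_mono_null hsub (measure_union_null ?_ (U_ge_one_null P U measU hUlaw))
      have h0 := hUlaw 0 ⟨le_refl 0, by norm_num⟩
      rw [ENNReal.ofReal_zero] at h0
      exact h0
    have key : ∀ x : ℝ, 0 < x → (-(1 - θ)⁻¹ * Real.log x ≤ t ↔ a ≤ x) := by
      intro x hx
      have h1 : -(1 - θ)⁻¹ * Real.log x = -Real.log x / (1-θ) := by
        field_simp
      rw [h1, div_le_iff₀ hβ, neg_le, Real.le_log_iff_exp_le hx,
        show Real.exp (-(t*(1-θ))) = a by rw [hadef]; congr 1; ring]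
    have hseteq : {ω | -(1 - θ)⁻¹ * Real.log (U ω) ≤ t} ∩ g = {ω | a ≤ U ω} ∩ g := by
      ext ω
      simp only [Set.mem_inter_iff, Set.mem_setOf_eq, hgdef]
      constructor
      · rintro ⟨h1, h2, h3⟩
        exact ⟨(key (U ω) h2).mp h1, h2, h3⟩
      · rintro ⟨h1, h2, h3⟩
        exact ⟨(key (U ω) h2).mpr h1, h2, h3⟩
    rw [measure_eq_of_inter_eq hgc hseteq, U_ge_eq P U measU hUlaw a ha0 ha1]
end
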